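/- arXiv:1710.10076 — 2 statements merged into one kernel-verified Lean document; each statement's English description precedes it below -/
import Mathlib

section
/- If G is a subcubic simple graph without isolated vertices satisfying ν_ac(G) < (n(G) − κ_G(K_{2,3}) − κ_G(K_4^+) − 2·κ_G(K_{3,3}))/4 and G has minimum order among all such graphs, then no subgraph of G is isomorphic to K_4^+. -/
open SimpleGraph

/-- `K4plus` is the graph obtained from `K_4` (on vertices 0,1,2,3) by subdividing
the edge between 0 and 1 once, using 4 as the subdivision vertex. -/
def K4plus : SimpleGraph (Fin 5) :=
  SimpleGraph.fromRel (fun a b =>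
    (a, b) ∈ ([(0,2),(0,3),(1,2),(1,3),(2,3),(0,4),(1,4)] : List (Fin 5 × Fin 5)))

/-- The complete bipartite graph `K_{2,3}`. -/
def K23 : SimpleGraph (Fin 2 ⊕ Fin 3) := completeBipartiteGraph (Fin 2) (Fin 3)

/-- The complete bipartite graph `K_{3,3}`. -/
def K33 : SimpleGraph (Fin 3 ⊕ Fin 3) := completeBipartiteGraph (Fin 3) (Fin 3)

/-- A matching `M` in `G` is acyclic if the subgraph of `G` induced by the set of
vertices incident to an edge of `M` is a forest. -/
def IsAcyclicMatching {V : Type*} (G : SimpleGraph V) (M : G.Subgraph) : Prop :=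
  M.IsMatching ∧ (G.induce M.support).IsAcyclic

/-- The acyclic matching number of `G`: the maximum number of edges of an acyclic
matching in `G`. -/
noncomputable def acyclicMatchingNumber {V : Type*} (G : SimpleGraph V) : ℕ :=
  sSup {k | ∃ M : G.Subgraph, IsAcyclicMatching G M ∧ M.edgeSet.ncard = k}

/-- `kappa G H` is the number of connected components of `G` whose induced subgraph
is isomorphic to `H`. -/
noncomputable def kappa {V W : Type*} (G : SimpleGraph V) (H : SimpleGraph W) : ℕ :=
  Nat.card {c : G.ConnectedComponent // Nonempty ((G.induce c.supp) ≃g H)}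

/-- A graph is subcubic if every vertex has degree at most 3. -/
def Subcubic {V : Type*} (G : SimpleGraph V) : Prop :=
  ∀ v, (G.neighborSet v).ncard ≤ 3

/-- A graph has no isolated vertices if every vertex has a neighbor. -/
def NoIsolatedVerts {V : Type*} (G : SimpleGraph V) : Prop :=
  ∀ v, ∃ w, G.Adj v w

/-- The lower bound `(n(G) - κ_G(K_{2,3}) - κ_G(K_4^+) - 2 κ_G(K_{3,3}))/4`. -/
noncomputable def acmBound {V : Type*} [Fintype V] (G : SimpleGraph V) : ℚ :=
  ((Fintype.card V : ℚ) - kappa G K23 - kappa G K4plus - 2 * kappa G K33) / 4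

/-- `G` is a counterexample of minimum order to the bound
`ν_ac(G) ≥ (n(G) - κ_G(K_{2,3}) - κ_G(K_4^+) - 2 κ_G(K_{3,3}))/4`
among subcubic graphs without isolated vertices. -/
def IsMinCounterexample {V : Type} [Fintype V] (G : SimpleGraph V) : Prop :=
  Subcubic G ∧ NoIsolatedVerts G ∧ (acyclicMatchingNumber G : ℚ) < acmBound G ∧
  ∀ (W : Type) [Fintype W] (H : SimpleGraph W),
    Subcubic H → NoIsolatedVerts H → (acyclicMatchingNumber H : ℚ) < acmBound H →
    Fintype.card V ≤ Fintype.card W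


variable {V : Type*} {G : SimpleGraph V}

lemma mem_of_closed {s : Set V} (hcl : ∀ x ∈ s, ∀ y, G.Adj x y → y ∈ s)
    {x y : V} (p : G.Walk x y) (hx : x ∈ s) : y ∈ s := by
  induction p with
  | nil => exact hx
  | cons h q ih => exact ih (hcl _ hx _ h)

lemma reachable_induce_of_closed {s : Set V} (hcl : ∀ x ∈ s, ∀ y, G.Adj x y → y ∈ s)
    {x y : V} (hx : x ∈ s) (hy : y ∈ s) (h : G.Reachable x y) :
    (G.induce s).Reachable ⟨x, hx⟩ ⟨y, hy⟩ := by
  obtain ⟨p⟩ := h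
  induction p with
  | nil => exact Reachable.refl _
  | @cons a b c h q ih =>
    have hb : b ∈ s := hcl _ hx _ h
    exact Reachable.trans (Adj.reachable (by exact h : (G.induce s).Adj ⟨a, hx⟩ ⟨b, hb⟩)) (ih hb hy)

lemma reachable_of_induce {s : Set V} {x y : ↥s} (h : (G.induce s).Reachable x y) :
    G.Reachable ↑x ↑y := by
  simpa using h.map (SimpleGraph.Embedding.induce s).toHom

lemma cycle_two_neighbors [DecidableEq V] {v x : V} (p : G.Walk v v) (hp : p.IsCycle)
    (hx : x ∈ p.support) : ∃ y z : V, y ≠ z ∧ G.Adj x y ∧ G.Adj x z := by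
  have hc : (p.rotate x hx).IsCycle := hp.rotate hx
  cases hcc : p.rotate x hx with
  | nil => rw [hcc] at hc; exact absurd rfl hc.ne_nil
  | @cons _ b _ h q =>
    rw [hcc] at hc
    cases hq : q.reverse with
    | nil => exact absurd h (G.irrefl)
    | @cons _ d _ h2 r =>
      refine ⟨b, d, ?_, h, h2⟩
      have hmem : s(x, d) ∈ q.edges := by
        have : s(x, d) ∈ q.reverse.edges := by rw [hq]; simp
        rw [Walk.edges_reverse, List.mem_reverse] at this
        exact this
      have hnot := ((Walk.cons_isCycle_iff q h).mp hc).2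
      rintro rfl
      exact hnot hmem

variable {V : Type*} {G : SimpleGraph V}

/-- iso between `(G.induce s).induce t` and `G.induce (val '' t)` -/
noncomputable def induceInduceIso (G : SimpleGraph V) (s : Set V) (t : Set ↥s) :
    ((G.induce s).induce t) ≃g G.induce (Subtype.val '' t) where
  toEquiv := Equiv.Set.image Subtype.val t Subtype.val_injective
  map_rel_iff' := by
    intro a b
    simp [Equiv.Set.image, Equiv.Set.imageOfInjOn]

lemma acyclic_of_iso {W : Type*} {A : SimpleGraph V} {B : SimpleGraph W}
    (f : A ≃g B) (hB : B.IsAcyclic) : A.IsAcyclic := by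
  intro v p hp
  exact hB (p.map f.toHom) (hp.map f.toEquiv.injective)

lemma walk_lift {α β : Type*} {A : SimpleGraph α} {B : SimpleGraph β} (f : A ↪g B)
    {x y : β} (p : B.Walk x y) (hsup : ∀ z ∈ p.support, ∃ w, f w = z) :
    ∃ (u v : α) (hu : f u = x) (hv : f v = y) (q : A.Walk u v),
      q.map f.toHom = p.copy hu.symm hv.symm := by
  induction p with
  | @nil a =>
    obtain ⟨u, hu⟩ := hsup a (by simp)
    subst hu
    exact ⟨u, u, rfl, rfl, Walk.nil, by simp⟩
  | @cons a b c h p ih =>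
    obtain ⟨u, hu⟩ := hsup a (by simp)
    obtain ⟨u', v, hu', hv, q, hq⟩ := ih (fun z hz => hsup z (by simp [hz]))
    subst hu; subst hu'; subst hv
    refine ⟨u, v, rfl, rfl, Walk.cons (f.map_rel_iff.mp h) q, ?_⟩
    simp only [Walk.map_cons, Walk.copy_rfl_rfl] at hq ⊢
    rw [hq]

lemma bot_mem_acmSet (G : SimpleGraph V) :
    0 ∈ {k | ∃ M : G.Subgraph, IsAcyclicMatching G M ∧ M.edgeSet.ncard = k} := by
  refine ⟨⊥, ⟨?_, ?_⟩, by simp [Subgraph.edgeSet_bot]⟩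
  · intro v hv
    simp [Subgraph.verts_bot] at hv
  · intro v p hp
    obtain ⟨w, hw⟩ := v.2
    simp at hw

lemma acm_bddAbove [Fintype V] (G : SimpleGraph V) :
    BddAbove {k | ∃ M : G.Subgraph, IsAcyclicMatching G M ∧ M.edgeSet.ncard = k} := by
  classical
  refine ⟨Nat.card (Sym2 V), ?_⟩
  rintro k ⟨M, _, rfl⟩
  calc M.edgeSet.ncard ≤ (Set.univ : Set (Sym2 V)).ncard :=
        Set.ncard_le_ncard (Set.subset_univ _) Set.finite_univ
    _ = Nat.card (Sym2 V) := by rw [Set.ncard_univ]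

lemma acm_mem [Fintype V] (G : SimpleGraph V) :
    ∃ M : G.Subgraph, IsAcyclicMatching G M ∧ M.edgeSet.ncard = acyclicMatchingNumber G :=
  Nat.sSup_mem ⟨0, bot_mem_acmSet G⟩ (acm_bddAbove G)

lemma ext_matching [Fintype V] (G : SimpleGraph V) (D : Set V) (a b : V)
    (ha : a ∈ D) (hb : b ∈ D) (hab : G.Adj a b)
    (hNa : ∀ y, G.Adj a y → y ∈ D) (hNb : ∀ y, G.Adj b y → y ∈ D) :
    acyclicMatchingNumber (G.induce Dᶜ) + 1 ≤ acyclicMatchingNumber G := by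
  classical
  obtain ⟨M', hM', hcard⟩ := acm_mem (G.induce Dᶜ)
  have hne : a ≠ b := hab.ne
  set M : G.Subgraph :=
    { verts := (Subtype.val '' M'.verts) ∪ {a, b}
      Adj := fun x y => (∃ (hx : x ∈ Dᶜ) (hy : y ∈ Dᶜ), M'.Adj ⟨x, hx⟩ ⟨y, hy⟩) ∨
        (x = a ∧ y = b) ∨ (x = b ∧ y = a)
      adj_sub := by
        rintro x y (⟨hx, hy, h⟩ | ⟨rfl, rfl⟩ | ⟨rfl, rfl⟩)
        · exact M'.adj_sub h
        · exact hab
        · exact hab.symm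
      edge_vert := by
        rintro x y (⟨hx, hy, h⟩ | ⟨rfl, rfl⟩ | ⟨rfl, rfl⟩)
        · exact Or.inl ⟨⟨x, hx⟩, M'.edge_vert h, rfl⟩
        · exact Or.inr (Or.inl rfl)
        · exact Or.inr (Or.inr rfl)
      symm := by
        constructor; rintro x y (⟨hx, hy, h⟩ | ⟨rfl, rfl⟩ | ⟨rfl, rfl⟩)
        · exact Or.inl ⟨hy, hx, h.symm⟩
        · exact Or.inr (Or.inr ⟨rfl, rfl⟩)
        · exact Or.inr (Or.inl ⟨rfl, rfl⟩) } with hMdef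
  have hmatch : M.IsMatching := by
    rintro v (⟨x, hx, rfl⟩ | hv)
    · obtain ⟨w, hw, huniq⟩ := hM'.1 hx
      refine ⟨↑w, Or.inl ⟨x.2, w.2, by simpa using hw⟩, ?_⟩
      rintro y (⟨h1, h2, hadj⟩ | ⟨h3, rfl⟩ | ⟨h3, rfl⟩)
      · have := huniq ⟨y, h2⟩ (by simpa using hadj)
        exact congrArg Subtype.val this
      · exact absurd ha (by rw [← h3]; exact x.2)
      · exact absurd hb (by rw [← h3]; exact x.2)
    · rcases hv with rfl | rfl
      · refine ⟨b, Or.inr (Or.inl ⟨rfl, rfl⟩), ?_⟩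
        rintro y (⟨h1, _, _⟩ | ⟨_, rfl⟩ | ⟨h3, rfl⟩)
        · exact absurd ha h1
        · rfl
        · exact absurd h3 hne
      · refine ⟨a, Or.inr (Or.inr ⟨rfl, rfl⟩), ?_⟩
        rintro y (⟨h1, _, _⟩ | ⟨h3, rfl⟩ | ⟨_, rfl⟩)
        · exact absurd hb h1
        · exact absurd h3 hne.symm
        · rfl
  have hedge : M.edgeSet = (Sym2.map (Subtype.val : ↥Dᶜ → V) '' M'.edgeSet) ∪ {s(a, b)} := by
    ext e
    refine Sym2.inductionOn e (fun x y => ?_)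
    constructor
    · rintro (⟨hx, hy, h⟩ | ⟨rfl, rfl⟩ | ⟨rfl, rfl⟩)
      · exact Or.inl ⟨s(⟨x, hx⟩, ⟨y, hy⟩), h, rfl⟩
      · exact Or.inr rfl
      · exact Or.inr Sym2.eq_swap
    · rintro (⟨e', he', heq⟩ | h)
      · revert he' heq
        refine Sym2.inductionOn e' (fun u v => ?_)
        intro he' heq
        rw [Sym2.map_pair_eq] at heq
        rw [Sym2.eq_iff] at heq
        rcases heq with ⟨h1, h2⟩ | ⟨h1, h2⟩
        · exact Or.inl ⟨h1 ▸ u.2, h2 ▸ v.2, by subst h1; subst h2; simpa using he'⟩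
        · exact Or.inl ⟨h2 ▸ v.2, h1 ▸ u.2, by subst h1; subst h2; simpa using (M'.adj_symm he')⟩
      · simp only [Set.mem_singleton_iff, Sym2.eq_iff] at h
        rcases h with ⟨rfl, rfl⟩ | ⟨rfl, rfl⟩
        · exact Or.inr (Or.inl ⟨rfl, rfl⟩)
        · exact Or.inr (Or.inr ⟨rfl, rfl⟩)
  have hcount : M.edgeSet.ncard = acyclicMatchingNumber (G.induce Dᶜ) + 1 := by
    rw [hedge]
    rw [Set.ncard_union_eq ?disj (Set.toFinite _) (Set.toFinite _)]
    · rw [Set.ncard_image_of_injective _ (Sym2.map.injective Subtype.val_injective), hcard,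
        Set.ncard_singleton]
    case disj =>
      rw [Set.disjoint_singleton_right]
      rintro ⟨e', he', heq⟩
      revert heq
      refine Sym2.inductionOn e' (fun u v => ?_)
      intro heq
      rw [Sym2.map_pair_eq, Sym2.eq_iff] at heq
      rcases heq with ⟨h1, _⟩ | ⟨_, h2⟩
      · exact u.2 (h1 ▸ ha)
      · exact v.2 (h2 ▸ ha)
  have hacyc : (G.induce M.support).IsAcyclic := by
    have hverts : M.support = (Subtype.val '' M'.support) ∪ {a, b} := by
      rw [hmatch.support_eq_verts, hM'.1.support_eq_verts]
    rw [hverts]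
    set s : Set V := Subtype.val '' M'.support with hsdef
    have hsacyc : (G.induce s).IsAcyclic :=
      acyclic_of_iso (induceInduceIso G Dᶜ M'.support).symm hM'.2
    have hsD : s ⊆ Dᶜ := by rintro _ ⟨x, _, rfl⟩; exact x.2
    intro w p hp
    have hnotab : ∀ c : V, c ∈ D → (∀ y, G.Adj c y → y ∈ D) → (c = a ∨ c = b) →
        ∀ z : ↥(s ∪ {a, b} : Set V), ↑z = c → z ∉ p.support := by
      intro c hc hNc hcab z hz hmem
      obtain ⟨y1, y2, hney, h1, h2⟩ := cycle_two_neighbors p hp hmem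
      have hy : ∀ y : ↥(s ∪ {a, b} : Set V), (G.induce (s ∪ {a, b} : Set V)).Adj z y →
          ((y : V) = a ∨ (y : V) = b) ∧ (y : V) ≠ c := by
        intro y hy'
        have hGadj : G.Adj c ↑y := by rw [← hz]; exact hy'
        have hyD : (y : V) ∈ D := hNc _ hGadj
        refine ⟨?_, (hGadj.ne).symm⟩
        rcases y.2 with hmem' | hmem'
        · exact absurd hyD (hsD hmem')
        · exact hmem'
      obtain ⟨e1, f1⟩ := hy y1 h1
      obtain ⟨e2, f2⟩ := hy y2 h2
      have hval : (y1 : V) = (y2 : V) := by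
        rcases hcab with rfl | rfl
        · rcases e1 with h | h
          · exact absurd h f1
          · rcases e2 with h' | h'
            · exact absurd h' f2
            · rw [h, h']
        · rcases e1 with h | h
          · rcases e2 with h' | h'
            · rw [h, h']
            · exact absurd h' f2
          · exact absurd h f1
      exact hney (Subtype.ext hval)
    have hsub : ∀ z ∈ p.support, ∃ w : ↥s, (⟨↑w, Or.inl w.2⟩ : ↥(s ∪ {a, b} : Set V)) = z := by
      intro z hzmem
      rcases z.2 with hmem' | hmem'
      · exact ⟨⟨↑z, hmem'⟩, Subtype.ext rfl⟩
      · rcases hmem' with h | h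
        · exact absurd hzmem (hnotab a ha hNa (Or.inl rfl) z h)
        · exact absurd hzmem (hnotab b hb hNb (Or.inr rfl) z h)
    let incl : G.induce s ↪g G.induce (s ∪ {a, b} : Set V) :=
      { toFun := fun x => ⟨↑x, Or.inl x.2⟩
        inj' := fun x y h => Subtype.ext (congrArg Subtype.val h : ((⟨↑x, Or.inl x.2⟩ : ↥(s ∪ {a, b} : Set V)) : V) = ↑(⟨↑y, Or.inl y.2⟩ : ↥(s ∪ {a, b} : Set V)))
        map_rel_iff' := Iff.rfl }
    obtain ⟨u, v', hu, hv, q, hq⟩ := walk_lift incl p hsub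
    obtain rfl : v' = u := incl.injective (hv.trans hu.symm)
    have hqcyc : (q.map incl.toHom).IsCycle := by
      rw [hq]
      exact (Walk.isCycle_copy p hu.symm).mpr hp
    exact hsacyc q ((Walk.map_isCycle_iff_of_injective incl.injective).mp hqcyc)
  calc acyclicMatchingNumber (G.induce Dᶜ) + 1 = M.edgeSet.ncard := hcount.symm
    _ ≤ acyclicMatchingNumber G := le_csSup (acm_bddAbove G) ⟨M, ⟨hmatch, hacyc⟩, rfl⟩

section Components

variable [Fintype V] (G : SimpleGraph V) (D : Set V)

/-- map components of the induced graph on `Dᶜ` to components of `G`. -/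
noncomputable def gamma (c : (G.induce Dᶜ).ConnectedComponent) : G.ConnectedComponent :=
  c.map (SimpleGraph.Embedding.induce Dᶜ).toHom

variable {G D}

lemma mem_gamma_supp {c' : (G.induce Dᶜ).ConnectedComponent} {x : ↥(Dᶜ : Set V)}
    (hx : x ∈ c'.supp) : ↑x ∈ (gamma G D c').supp := by
  rw [ConnectedComponent.mem_supp_iff] at hx ⊢
  rw [← hx]
  rfl

lemma gamma_supp_eq {c' : (G.induce Dᶜ).ConnectedComponent}
    (hcl : ∀ x ∈ Subtype.val '' c'.supp, ∀ y, G.Adj x y → y ∈ Subtype.val '' c'.supp) :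
    (gamma G D c').supp = Subtype.val '' c'.supp := by
  obtain ⟨x0, hx0⟩ := c'.exists_rep
  have hx0' : x0 ∈ c'.supp := by rw [ConnectedComponent.mem_supp_iff]; exact hx0
  apply Set.eq_of_subset_of_subset
  · intro y hy
    rw [ConnectedComponent.mem_supp_iff] at hy
    have h1 : G.connectedComponentMk ↑x0 = gamma G D c' := by rw [← hx0]; rfl
    have hreach : G.Reachable ↑x0 y := ConnectedComponent.eq.mp (h1.trans hy.symm)
    obtain ⟨p⟩ := hreach
    exact mem_of_closed hcl p ⟨x0, hx0', rfl⟩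
  · rintro _ ⟨x, hx, rfl⟩
    exact mem_gamma_supp hx

lemma gamma_inj {c1 c2 : (G.induce Dᶜ).ConnectedComponent}
    (hcl : ∀ x ∈ Subtype.val '' c1.supp, ∀ y, G.Adj x y → y ∈ Subtype.val '' c1.supp)
    (heq : gamma G D c1 = gamma G D c2) : c1 = c2 := by
  obtain ⟨x2, hx2⟩ := c2.exists_rep
  have hx2' : x2 ∈ c2.supp := by rw [ConnectedComponent.mem_supp_iff]; exact hx2
  have : (x2 : V) ∈ (gamma G D c1).supp := heq ▸ mem_gamma_supp hx2'
  rw [gamma_supp_eq hcl] at this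
  obtain ⟨x1, hx1, hval⟩ := this
  obtain rfl : x1 = x2 := Subtype.ext hval
  exact ((ConnectedComponent.mem_supp_iff _ _).mp hx1).symm.trans hx2

lemma special_gamma {W : Type*} {X : SimpleGraph W} {c' : (G.induce Dᶜ).ConnectedComponent}
    (hcl : ∀ x ∈ Subtype.val '' c'.supp, ∀ y, G.Adj x y → y ∈ Subtype.val '' c'.supp)
    (hsp : Nonempty (((G.induce Dᶜ).induce c'.supp) ≃g X)) :
    Nonempty ((G.induce (gamma G D c').supp) ≃g X) := by
  obtain ⟨f⟩ := hsp
  rw [gamma_supp_eq hcl]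
  exact ⟨((induceInduceIso G Dᶜ c'.supp).symm).trans f⟩

lemma kappa_mono {W : Type*} (X : SimpleGraph W)
    (hcl : ∀ c' : (G.induce Dᶜ).ConnectedComponent,
      Nonempty (((G.induce Dᶜ).induce c'.supp) ≃g X) →
      (∀ x ∈ Subtype.val '' c'.supp, ∀ y, G.Adj x y → y ∈ Subtype.val '' c'.supp)) :
    kappa (G.induce Dᶜ) X ≤ kappa G X := by
  classical
  refine Nat.card_le_card_of_injective
    (fun c => ⟨gamma G D c.1, special_gamma (hcl c.1 c.2) c.2⟩) ?_
  rintro ⟨c1, h1⟩ ⟨c2, h2⟩ h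
  exact Subtype.ext (gamma_inj (hcl c1 h1) (congrArg Subtype.val h))

lemma kappa_succ_le {W : Type*} (X : SimpleGraph W) (c0 : G.ConnectedComponent)
    (hcl : ∀ c' : (G.induce Dᶜ).ConnectedComponent,
      Nonempty (((G.induce Dᶜ).induce c'.supp) ≃g X) →
      (∀ x ∈ Subtype.val '' c'.supp, ∀ y, G.Adj x y → y ∈ Subtype.val '' c'.supp))
    (hc0 : Nonempty ((G.induce c0.supp) ≃g X))
    (hne : ∀ c' : (G.induce Dᶜ).ConnectedComponent,
      Nonempty (((G.induce Dᶜ).induce c'.supp) ≃g X) → gamma G D c' ≠ c0) :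
    kappa (G.induce Dᶜ) X + 1 ≤ kappa G X := by
  classical
  have : kappa (G.induce Dᶜ) X + 1 =
      Nat.card ({c : (G.induce Dᶜ).ConnectedComponent //
        Nonempty (((G.induce Dᶜ).induce c.supp) ≃g X)} ⊕ Unit) := by
    rw [Nat.card_sum]
    simp [kappa]
  rw [this, kappa]
  refine Nat.card_le_card_of_injective
    (fun c => Sum.elim (fun c' : {c : (G.induce Dᶜ).ConnectedComponent //
        Nonempty (((G.induce Dᶜ).induce c.supp) ≃g X)} =>
        (⟨gamma G D c'.1, special_gamma (hcl c'.1 c'.2) c'.2⟩ :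
          {c : G.ConnectedComponent // Nonempty ((G.induce c.supp) ≃g X)}))
      (fun _ : Unit => ⟨c0, hc0⟩) c) ?_
  rintro (⟨c1, h1⟩ | ⟨⟩) (⟨c2, h2⟩ | ⟨⟩) h
  · simp only [Sum.elim_inl] at h
    exact congrArg Sum.inl (Subtype.ext (gamma_inj (hcl c1 h1) (congrArg Subtype.val h)))
  · simp only [Sum.elim_inl, Sum.elim_inr] at h
    exact absurd (congrArg Subtype.val h) (hne c1 h1)
  · simp only [Sum.elim_inl, Sum.elim_inr] at h
    exact absurd (congrArg Subtype.val h).symm (hne c2 h2)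
  · rfl

end Components

instance : DecidableRel K4plus.Adj := fun a b =>
  decidable_of_iff _ (SimpleGraph.fromRel_adj _ a b).symm

instance : DecidableRel K23.Adj := fun a b => by
  cases a <;> cases b <;> simp only [K23, completeBipartiteGraph] <;> infer_instance

instance : DecidableRel K33.Adj := fun a b => by
  cases a <;> cases b <;> simp only [K33, completeBipartiteGraph] <;> infer_instance

example : K4plus.Adj 0 2 := by decide
example : ¬ K4plus.Adj 0 1 := by decide

lemma mindeg2_K23 : ∀ w, ∃ y z, y ≠ z ∧ K23.Adj w y ∧ K23.Adj w z := by decide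
lemma mindeg2_K33 : ∀ w, ∃ y z, y ≠ z ∧ K33.Adj w y ∧ K33.Adj w z := by decide
lemma mindeg2_K4plus : ∀ w, ∃ y z, y ≠ z ∧ K4plus.Adj w y ∧ K4plus.Adj w z := by decide

lemma supp_closed_adj {G : SimpleGraph V} {c : G.ConnectedComponent} {x y : V}
    (hx : x ∈ c.supp) (h : G.Adj x y) : y ∈ c.supp := by
  rw [ConnectedComponent.mem_supp_iff] at hx ⊢
  exact (ConnectedComponent.sound h.symm.reachable).trans hx

lemma three_nbrs {G : SimpleGraph V} [Fintype V] {x a b c : V}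
    (hdeg : (G.neighborSet x).ncard ≤ 3) (h1 : G.Adj x a) (h2 : G.Adj x b) (h3 : G.Adj x c)
    (hab : a ≠ b) (hac : a ≠ c) (hbc : b ≠ c) :
    ∀ y, G.Adj x y → y = a ∨ y = b ∨ y = c := by
  intro y hy
  by_contra hcon
  push_neg at hcon
  obtain ⟨hya, hyb, hyc⟩ := hcon
  have hsub : ({y, a, b, c} : Set V) ⊆ G.neighborSet x := by
    rintro z (rfl | rfl | rfl | rfl) <;> assumption
  have h4 : ({y, a, b, c} : Set V).ncard = 4 := by
    rw [Set.ncard_insert_of_notMem (by simp [hya, hyb, hyc]) (Set.toFinite _),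
      Set.ncard_insert_of_notMem (by simp [hab, hac]) (Set.toFinite _),
      Set.ncard_insert_of_notMem (by simp [hbc]) (Set.toFinite _),
      Set.ncard_singleton]
  have := Set.ncard_le_ncard hsub (Set.toFinite _)
  omega

lemma subcubic_induce {G : SimpleGraph V} [Fintype V] (h : Subcubic G) (s : Set V) :
    Subcubic (G.induce s) := by
  intro x
  calc ((G.induce s).neighborSet x).ncard
      = (Subtype.val '' (G.induce s).neighborSet x).ncard :=
        (Set.ncard_image_of_injective _ Subtype.val_injective).symm
    _ ≤ (G.neighborSet ↑x).ncard := Set.ncard_le_ncard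
        (by rintro _ ⟨y, hy, rfl⟩; exact hy) (Set.toFinite _)
    _ ≤ 3 := h ↑x

set_option maxHeartbeats 3000000 in
/-- A minimum-order counterexample has no subgraph isomorphic to `K_4^+`. -/
theorem stmt_2 {V : Type} [Fintype V] (G : SimpleGraph V)
    (hmin : IsMinCounterexample G) :
    ∀ H : G.Subgraph, ¬ Nonempty (H.coe ≃g K4plus) := by
  rintro H ⟨e⟩
  classical
  obtain ⟨hsub, hiso, hlt, hmin'⟩ := hmin
  set v : Fin 5 → V := fun i => ↑(e.symm i) with hvdef
  have hvinj : Function.Injective v := fun i j h =>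
    e.symm.injective (Subtype.ext h)
  have hvne : ∀ {i j : Fin 5}, i ≠ j → v i ≠ v j := fun hij h => hij (hvinj h)
  have hadj : ∀ i j : Fin 5, K4plus.Adj i j → G.Adj (v i) (v j) := by
    intro i j hij
    have h1 : H.coe.Adj (e.symm i) (e.symm j) := e.symm.map_rel_iff.mpr hij
    exact H.adj_sub h1
  have ha02 : G.Adj (v 0) (v 2) := hadj 0 2 (by decide)
  have ha03 : G.Adj (v 0) (v 3) := hadj 0 3 (by decide)
  have ha04 : G.Adj (v 0) (v 4) := hadj 0 4 (by decide)
  have ha12 : G.Adj (v 1) (v 2) := hadj 1 2 (by decide)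
  have ha13 : G.Adj (v 1) (v 3) := hadj 1 3 (by decide)
  have ha14 : G.Adj (v 1) (v 4) := hadj 1 4 (by decide)
  have ha23 : G.Adj (v 2) (v 3) := hadj 2 3 (by decide)
  have nb0 : ∀ y, G.Adj (v 0) y → y = v 2 ∨ y = v 3 ∨ y = v 4 :=
    three_nbrs (hsub (v 0)) ha02 ha03 ha04 (hvne (by decide)) (hvne (by decide))
      (hvne (by decide))
  have nb1 : ∀ y, G.Adj (v 1) y → y = v 2 ∨ y = v 3 ∨ y = v 4 :=
    three_nbrs (hsub (v 1)) ha12 ha13 ha14 (hvne (by decide)) (hvne (by decide))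
      (hvne (by decide))
  have nb2 : ∀ y, G.Adj (v 2) y → y = v 0 ∨ y = v 1 ∨ y = v 3 :=
    three_nbrs (hsub (v 2)) ha02.symm ha12.symm ha23 (hvne (by decide)) (hvne (by decide))
      (hvne (by decide))
  have nb3 : ∀ y, G.Adj (v 3) y → y = v 0 ∨ y = v 1 ∨ y = v 2 :=
    three_nbrs (hsub (v 3)) ha03.symm ha13.symm ha23.symm (hvne (by decide)) (hvne (by decide))
      (hvne (by decide))
  have hcard5 : 5 ≤ Fintype.card V := by
    have := Fintype.card_le_of_injective v hvinj
    simpa using this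
  by_cases h4 : ∀ y, G.Adj (v 4) y → y = v 0 ∨ y = v 1
  · -- Case A : the K4plus is a whole component
    set D : Set V := {v 0, v 1, v 2, v 3, v 4} with hDdef
    have hDcases : ∀ y ∈ D, y = v 0 ∨ y = v 1 ∨ y = v 2 ∨ y = v 3 ∨ y = v 4 := by
      intro y hy
      simpa [hDdef] using hy
    have hmem2 : v 2 ∈ D := by simp [hDdef]
    have hmem3 : v 3 ∈ D := by simp [hDdef]
    have hND : ∀ x ∈ D, ∀ y, G.Adj x y → y ∈ D := by
      intro x hx y hxy
      rcases hDcases x hx with rfl | rfl | rfl | rfl | rfl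
      · rcases nb0 y hxy with rfl | rfl | rfl <;> simp [hDdef]
      · rcases nb1 y hxy with rfl | rfl | rfl <;> simp [hDdef]
      · rcases nb2 y hxy with rfl | rfl | rfl <;> simp [hDdef]
      · rcases nb3 y hxy with rfl | rfl | rfl <;> simp [hDdef]
      · rcases h4 y hxy with rfl | rfl <;> simp [hDdef]
    have hsubc' : Subcubic (G.induce Dᶜ) := subcubic_induce hsub _
    have hnoiso' : NoIsolatedVerts (G.induce Dᶜ) := by
      intro w
      obtain ⟨x, hx⟩ := hiso ↑w
      by_cases hxD : x ∈ D
      · exact absurd (hND x hxD ↑w hx.symm) w.2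
      · exact ⟨⟨x, hxD⟩, hx⟩
    have hν : acyclicMatchingNumber (G.induce Dᶜ) + 1 ≤ acyclicMatchingNumber G :=
      ext_matching G D (v 2) (v 3) hmem2 hmem3 ha23
        (fun y h => hND _ hmem2 _ h) (fun y h => hND _ hmem3 _ h)
    have hsuppc0 : (G.connectedComponentMk (v 0)).supp = D := by
      apply Set.eq_of_subset_of_subset
      · intro y hy
        rw [ConnectedComponent.mem_supp_iff] at hy
        have hreach : G.Reachable (v 0) y := (ConnectedComponent.eq.mp hy).symm
        obtain ⟨p⟩ := hreach
        exact mem_of_closed hND p (by simp [hDdef])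
      · intro y hy
        rw [ConnectedComponent.mem_supp_iff]
        rcases hDcases y hy with rfl | rfl | rfl | rfl | rfl
        · rfl
        · exact ConnectedComponent.sound (ha12.reachable.trans ha02.symm.reachable)
        · exact ConnectedComponent.sound ha02.symm.reachable
        · exact ConnectedComponent.sound ha03.symm.reachable
        · exact ConnectedComponent.sound ha04.symm.reachable
    have hspecial : Nonempty ((G.induce (G.connectedComponentMk (v 0)).supp) ≃g K4plus) := by
      rw [hsuppc0]
      have hg : ∀ i : Fin 5, v i ∈ D := by
        intro i
        fin_cases i <;> simp [hDdef]
      have hginj : Function.Injective (fun i : Fin 5 => (⟨v i, hg i⟩ : ↥D)) := fun i j h =>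
        hvinj (Subtype.mk_eq_mk.mp h)
      have hgsurj : Function.Surjective (fun i : Fin 5 => (⟨v i, hg i⟩ : ↥D)) := by
        rintro ⟨y, hy⟩
        rcases hDcases y hy with rfl | rfl | rfl | rfl | rfl
        exacts [⟨0, rfl⟩, ⟨1, rfl⟩, ⟨2, rfl⟩, ⟨3, rfl⟩, ⟨4, rfl⟩]
      refine ⟨(RelIso.mk (Equiv.ofBijective _ ⟨hginj, hgsurj⟩) ?_ :
        K4plus ≃g G.induce D).symm⟩
      intro i j
      show (G.induce D).Adj ⟨v i, hg i⟩ ⟨v j, hg j⟩ ↔ K4plus.Adj i j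
      constructor
      · intro hGa
        have hG : G.Adj (v i) (v j) := hGa
        by_contra hK
        have hne : i ≠ j := fun hij => G.irrefl (hij ▸ hG)
        fin_cases i <;> fin_cases j <;>
          first
          | exact hK (by decide)
          | exact hne rfl
          | (rcases nb0 _ hG with h | h | h <;> exact hvne (by decide) h)
          | (rcases nb1 _ hG with h | h | h <;> exact hvne (by decide) h)
          | (rcases nb2 _ hG with h | h | h <;> exact hvne (by decide) h)
          | (rcases nb3 _ hG with h | h | h <;> exact hvne (by decide) h)
          | (rcases h4 _ hG with h | h <;> exact hvne (by decide) h)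
      · exact hadj i j
    have hclA : ∀ c' : (G.induce Dᶜ).ConnectedComponent,
        (∀ x ∈ Subtype.val '' c'.supp, ∀ y, G.Adj x y → y ∈ Subtype.val '' c'.supp) := by
      rintro c' _ ⟨x, hx, rfl⟩ y hxy
      have hyD : y ∉ D := fun hyD => x.2 (hND y hyD ↑x hxy.symm)
      have hadj' : (G.induce Dᶜ).Adj x ⟨y, hyD⟩ := hxy
      exact ⟨⟨y, hyD⟩, supp_closed_adj hx hadj', rfl⟩
    have hneA : ∀ c' : (G.induce Dᶜ).ConnectedComponent,
        gamma G D c' ≠ G.connectedComponentMk (v 0) := by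
      intro c' hcontra
      obtain ⟨x0, hx0⟩ := c'.exists_rep
      have hx0' : x0 ∈ c'.supp := by rw [ConnectedComponent.mem_supp_iff]; exact hx0
      have hmem := mem_gamma_supp hx0'
      rw [hcontra, hsuppc0] at hmem
      exact x0.2 hmem
    have k23 : kappa (G.induce Dᶜ) K23 ≤ kappa G K23 :=
      kappa_mono K23 (fun c' _ => hclA c')
    have k33 : kappa (G.induce Dᶜ) K33 ≤ kappa G K33 :=
      kappa_mono K33 (fun c' _ => hclA c')
    have k4 : kappa (G.induce Dᶜ) K4plus + 1 ≤ kappa G K4plus :=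
      kappa_succ_le K4plus (G.connectedComponentMk (v 0)) (fun c' _ => hclA c') hspecial
        (fun c' _ => hneA c')
    have hncardD : D.ncard = 5 := by
      rw [hDdef,
        Set.ncard_insert_of_notMem (by
          simp only [Set.mem_insert_iff, Set.mem_singleton_iff]
          push_neg
          exact ⟨hvne (by decide), hvne (by decide), hvne (by decide), hvne (by decide)⟩)
          (Set.toFinite _),
        Set.ncard_insert_of_notMem (by
          simp only [Set.mem_insert_iff, Set.mem_singleton_iff]
          push_neg
          exact ⟨hvne (by decide), hvne (by decide), hvne (by decide)⟩) (Set.toFinite _),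
        Set.ncard_insert_of_notMem (by
          simp only [Set.mem_insert_iff, Set.mem_singleton_iff]
          push_neg
          exact ⟨hvne (by decide), hvne (by decide)⟩) (Set.toFinite _),
        Set.ncard_insert_of_notMem (by
          simp only [Set.mem_singleton_iff]
          exact hvne (by decide)) (Set.toFinite _),
        Set.ncard_singleton]
    have hcardc : Fintype.card ↥(Dᶜ : Set V) = Fintype.card V - 5 := by
      rw [Fintype.card_compl_set]
      congr 1
      rw [← Nat.card_eq_fintype_card, Nat.card_coe_set_eq]
      exact hncardD
    have hb : acmBound G - 1 ≤ acmBound (G.induce Dᶜ) := by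
      simp only [acmBound]
      have hc : (Fintype.card ↥(Dᶜ : Set V) : ℚ) = (Fintype.card V : ℚ) - 5 := by
        rw [hcardc, Nat.cast_sub (by omega : 5 ≤ Fintype.card V)]
        norm_num
      rw [hc]
      have c1 : (kappa (G.induce Dᶜ) K23 : ℚ) ≤ kappa G K23 := Nat.cast_le.mpr k23
      have c2 : (kappa (G.induce Dᶜ) K4plus : ℚ) + 1 ≤ kappa G K4plus := by
        have h2 : ((kappa (G.induce Dᶜ) K4plus + 1 : ℕ) : ℚ) ≤ ((kappa G K4plus : ℕ) : ℚ) :=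
          Nat.cast_le.mpr k4
        push_cast at h2
        linarith
      have c3 : (kappa (G.induce Dᶜ) K33 : ℚ) ≤ kappa G K33 := Nat.cast_le.mpr k33
      linarith
    have h1 : (acyclicMatchingNumber (G.induce Dᶜ) : ℚ) ≤ (acyclicMatchingNumber G : ℚ) - 1 := by
      have h2 : ((acyclicMatchingNumber (G.induce Dᶜ) + 1 : ℕ) : ℚ) ≤
          ((acyclicMatchingNumber G : ℕ) : ℚ) := Nat.cast_le.mpr hν
      push_cast at h2
      linarith
    have hlt' : (acyclicMatchingNumber (G.induce Dᶜ) : ℚ) < acmBound (G.induce Dᶜ) := by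
      linarith
    have hfin := hmin' ↥(Dᶜ : Set V) (G.induce Dᶜ) hsubc' hnoiso' hlt'
    rw [hcardc] at hfin
    omega

  · -- Case B : vertex 4 has an external neighbor u
    push_neg at h4
    obtain ⟨u, hu, hune⟩ := h4
    obtain ⟨hu0, hu1⟩ := hune
    have hu2 : u ≠ v 2 := by
      rintro rfl
      rcases nb2 _ hu.symm with h | h | h <;> exact hvne (by decide) h
    have hu3 : u ≠ v 3 := by
      rintro rfl
      rcases nb3 _ hu.symm with h | h | h <;> exact hvne (by decide) h
    have nb4 : ∀ y, G.Adj (v 4) y → y = v 0 ∨ y = v 1 ∨ y = u :=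
      three_nbrs (hsub (v 4)) ha04.symm ha14.symm hu (hvne (by decide)) hu0.symm hu1.symm
    set D : Set V := {v 0, v 1, v 2, v 3} with hDdef
    have hmem2 : v 2 ∈ D := by simp [hDdef]
    have hmem3 : v 3 ∈ D := by simp [hDdef]
    have hDcases : ∀ y ∈ D, y = v 0 ∨ y = v 1 ∨ y = v 2 ∨ y = v 3 := by
      intro y hy
      simpa [hDdef] using hy
    have huD : u ∉ D := by
      intro hmem
      rcases hDcases u hmem with rfl | rfl | rfl | rfl
      · exact hu0 rfl
      · exact hu1 rfl
      · exact hu2 rfl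
      · exact hu3 rfl
    have hIn : ∀ x y, G.Adj x y → y ∈ D → x = v 4 ∨ x ∈ D := by
      intro x y hxy hyD
      rcases hDcases y hyD with rfl | rfl | rfl | rfl
      · rcases nb0 x hxy.symm with rfl | rfl | rfl
        · exact Or.inr hmem2
        · exact Or.inr hmem3
        · exact Or.inl rfl
      · rcases nb1 x hxy.symm with rfl | rfl | rfl
        · exact Or.inr hmem2
        · exact Or.inr hmem3
        · exact Or.inl rfl
      · rcases nb2 x hxy.symm with rfl | rfl | rfl
        · exact Or.inr (by simp [hDdef])
        · exact Or.inr (by simp [hDdef])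
        · exact Or.inr hmem3
      · rcases nb3 x hxy.symm with rfl | rfl | rfl
        · exact Or.inr (by simp [hDdef])
        · exact Or.inr (by simp [hDdef])
        · exact Or.inr hmem2
    have hsubc' : Subcubic (G.induce Dᶜ) := subcubic_induce hsub _
    have hnoiso' : NoIsolatedVerts (G.induce Dᶜ) := by
      intro w
      obtain ⟨x, hx⟩ := hiso ↑w
      by_cases hxD : x ∈ D
      · rcases hIn ↑w x hx hxD with hw4 | hwD
        · refine ⟨⟨u, huD⟩, ?_⟩
          show G.Adj ↑w u
          rw [hw4]
          exact hu
        · exact absurd hwD w.2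
      · exact ⟨⟨x, hxD⟩, hx⟩
    have hν : acyclicMatchingNumber (G.induce Dᶜ) + 1 ≤ acyclicMatchingNumber G := by
      refine ext_matching G D (v 2) (v 3) hmem2 hmem3 ha23 ?_ ?_
      · intro y h
        rcases nb2 y h with rfl | rfl | rfl
        · simp [hDdef]
        · simp [hDdef]
        · exact hmem3
      · intro y h
        rcases nb3 y h with rfl | rfl | rfl
        · simp [hDdef]
        · simp [hDdef]
        · exact hmem2
    have hpend : ∀ (c' : (G.induce Dᶜ).ConnectedComponent) {W : Type} (X : SimpleGraph W),
        (∀ w, ∃ y z, y ≠ z ∧ X.Adj w y ∧ X.Adj w z) →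
        Nonempty (((G.induce Dᶜ).induce c'.supp) ≃g X) →
        ∀ x : ↥(Dᶜ : Set V), x ∈ c'.supp → (x : V) ≠ v 4 := by
      rintro c' W X hmindeg ⟨f⟩ x hx hxv4
      set a : ↥c'.supp := ⟨x, hx⟩ with hadef
      obtain ⟨y, z, hyz, hay, haz⟩ := hmindeg (f a)
      have hb : ∀ y', X.Adj (f a) y' → ((f.symm y' : ↥(Dᶜ : Set V)) : V) = u := by
        intro y' hy'
        have h1 : (((G.induce Dᶜ).induce c'.supp)).Adj a (f.symm y') := by
          refine f.map_rel_iff.mp ?_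
          rwa [f.apply_symm_apply]
        have h2 : G.Adj (v 4) ↑↑(f.symm y') := by
          rw [← hxv4]
          exact h1
        rcases nb4 _ h2 with h | h | h
        · exact absurd (h ▸ (f.symm y' : ↥(Dᶜ : Set V)).2) (by simp [hDdef])
        · exact absurd (h ▸ (f.symm y' : ↥(Dᶜ : Set V)).2) (by simp [hDdef])
        · exact h
      have hbeq : f.symm y = f.symm z :=
        Subtype.ext (Subtype.ext ((hb y hay).trans (hb z haz).symm))
      exact hyz (f.symm.injective hbeq)
    have hclB : ∀ {W : Type} (X : SimpleGraph W),
        (∀ w, ∃ y z, y ≠ z ∧ X.Adj w y ∧ X.Adj w z) →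
        ∀ c' : (G.induce Dᶜ).ConnectedComponent,
        Nonempty (((G.induce Dᶜ).induce c'.supp) ≃g X) →
        (∀ x ∈ Subtype.val '' c'.supp, ∀ y, G.Adj x y → y ∈ Subtype.val '' c'.supp) := by
      intro W X hm c' hsp
      rintro _ ⟨x, hx, rfl⟩ y hxy
      by_cases hyD : y ∈ D
      · rcases hIn ↑x y hxy hyD with h | h
        · exact absurd h (hpend c' X hm hsp x hx)
        · exact absurd h x.2
      · have hadj' : (G.induce Dᶜ).Adj x ⟨y, hyD⟩ := hxy
        exact ⟨⟨y, hyD⟩, supp_closed_adj hx hadj', rfl⟩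
    have k23 : kappa (G.induce Dᶜ) K23 ≤ kappa G K23 :=
      kappa_mono K23 (fun c' hsp => hclB K23 mindeg2_K23 c' hsp)
    have k4 : kappa (G.induce Dᶜ) K4plus ≤ kappa G K4plus :=
      kappa_mono K4plus (fun c' hsp => hclB K4plus mindeg2_K4plus c' hsp)
    have k33 : kappa (G.induce Dᶜ) K33 ≤ kappa G K33 :=
      kappa_mono K33 (fun c' hsp => hclB K33 mindeg2_K33 c' hsp)
    have hncardD : D.ncard = 4 := by
      rw [hDdef,
        Set.ncard_insert_of_notMem (by
          simp only [Set.mem_insert_iff, Set.mem_singleton_iff]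
          push_neg
          exact ⟨hvne (by decide), hvne (by decide), hvne (by decide)⟩) (Set.toFinite _),
        Set.ncard_insert_of_notMem (by
          simp only [Set.mem_insert_iff, Set.mem_singleton_iff]
          push_neg
          exact ⟨hvne (by decide), hvne (by decide)⟩) (Set.toFinite _),
        Set.ncard_insert_of_notMem (by
          simp only [Set.mem_singleton_iff]
          exact hvne (by decide)) (Set.toFinite _),
        Set.ncard_singleton]
    have hcardc : Fintype.card ↥(Dᶜ : Set V) = Fintype.card V - 4 := by
      rw [Fintype.card_compl_set]
      congr 1
      rw [← Nat.card_eq_fintype_card, Nat.card_coe_set_eq]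
      exact hncardD
    have hb : acmBound G - 1 ≤ acmBound (G.induce Dᶜ) := by
      simp only [acmBound]
      have hc : (Fintype.card ↥(Dᶜ : Set V) : ℚ) = (Fintype.card V : ℚ) - 4 := by
        rw [hcardc, Nat.cast_sub (by omega : 4 ≤ Fintype.card V)]
        norm_num
      rw [hc]
      have c1 : (kappa (G.induce Dᶜ) K23 : ℚ) ≤ kappa G K23 := Nat.cast_le.mpr k23
      have c2 : (kappa (G.induce Dᶜ) K4plus : ℚ) ≤ kappa G K4plus := Nat.cast_le.mpr k4
      have c3 : (kappa (G.induce Dᶜ) K33 : ℚ) ≤ kappa G K33 := Nat.cast_le.mpr k33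
      linarith
    have h1 : (acyclicMatchingNumber (G.induce Dᶜ) : ℚ) ≤ (acyclicMatchingNumber G : ℚ) - 1 := by
      have h2 : ((acyclicMatchingNumber (G.induce Dᶜ) + 1 : ℕ) : ℚ) ≤
          ((acyclicMatchingNumber G : ℕ) : ℚ) := Nat.cast_le.mpr hν
      push_cast at h2
      linarith
    have hlt' : (acyclicMatchingNumber (G.induce Dᶜ) : ℚ) < acmBound (G.induce Dᶜ) := by
      linarith
    have hfin := hmin' ↥(Dᶜ : Set V) (G.induce Dᶜ) hsubc' hnoiso' hlt'
    rw [hcardc] at hfin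
    omega
end

section
/- If G is a subcubic simple graph without isolated vertices satisfying ν_ac(G) < (n(G) − κ_G(K_{2,3}) − κ_G(K_4^+) − 2·κ_G(K_{3,3}))/4 and G has minimum order among all such graphs, then no vertex of degree 1 in G is adjacent to a vertex that does not lie on a cycle of G. -/
open SimpleGraph

namespace AMaux

variable {V : Type} {G : SimpleGraph V}

/-- Lift a walk whose support lies in `s` to the induced subgraph. -/
lemma exists_induce_walk {s : Set V} :
    ∀ {a b : V} (p : G.Walk a b) (h : ∀ z ∈ p.support, z ∈ s),
      ∃ q : (G.induce s).Walk ⟨a, h a p.start_mem_support⟩ ⟨b, h b p.end_mem_support⟩,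
        q.map (Embedding.induce s).toHom = p := by
  intro a b p
  induction p with
  | nil => intro h; exact ⟨.nil, rfl⟩
  | @cons a c b hadj p ih =>
    intro h
    obtain ⟨q, hq⟩ := ih (fun z hz => h z (by simp [hz]))
    refine ⟨.cons (by exact hadj) q, ?_⟩
    exact congrArg (Walk.cons hadj) hq

lemma three_distinct_support {a b w : V} (c : G.Walk w w) (hc : c.IsCycle)
    (hsub : ∀ z ∈ c.support, z = a ∨ z = b) : False := by
  classical
  have h3 : 3 ≤ c.length := hc.three_le_length
  have hnd : c.support.tail.Nodup := hc.2
  have hlen : c.support.tail.length = c.length := by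
    have h := c.length_support
    have : c.support.tail.length + 1 = c.support.length := by
      cases hs : c.support with
      | nil => exact absurd hs c.support_ne_nil
      | cons x l => simp [hs]
    omega
  have hcard : c.support.tail.toFinset.card = c.length := by
    rw [List.toFinset_card_of_nodup hnd, hlen]
  have hsub2 : c.support.tail.toFinset ⊆ {a, b} := by
    intro z hz
    simp only [List.mem_toFinset] at hz
    have h := hsub z (List.mem_of_mem_tail hz)
    simp only [Finset.mem_insert, Finset.mem_singleton]
    exact h
  have h2 : c.support.tail.toFinset.card ≤ ({a, b} : Finset V).card := Finset.card_le_card hsub2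
  have h2' : ({a, b} : Finset V).card ≤ 2 := (Finset.card_insert_le _ _).trans (by simp)
  omega

lemma exists_adj_mem_of_mem_support_ne_start :
    ∀ {a b : V} (p : G.Walk a b) (z : V), z ∈ p.support → z ≠ a →
      ∃ w ∈ p.support, G.Adj z w := by
  intro a b p
  induction p with
  | nil => intro z hz hne; simp at hz; exact absurd hz hne
  | @cons a c b hadj p ih =>
    intro z hz hne
    rcases List.mem_cons.mp (by simpa using hz) with h | h
    · exact absurd h hne
    · by_cases hzc : z = c
      · subst hzc; exact ⟨a, by simp, hadj.symm⟩
      · obtain ⟨w, hw, hadjw⟩ := ih z h hzc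
        exact ⟨w, by simp [hw], hadjw⟩

/-- Double-induce isomorphism. -/
noncomputable def doubleInduceIso (s : Set V) (t : Set ↥s) :
    ((G.induce s).induce t) ≃g (G.induce (Subtype.val '' t)) where
  toEquiv := Equiv.Set.image Subtype.val t Subtype.val_injective
  map_rel_iff' := by
    rintro ⟨⟨x, hxs⟩, hxt⟩ ⟨⟨y, hys⟩, hyt⟩
    rfl

lemma isAcyclic_of_iso {W : Type} {H : SimpleGraph W} (f : G ≃g H) (hG : G.IsAcyclic) :
    H.IsAcyclic := by
  intro w c hc
  exact hG (c.map f.symm.toHom) ((Walk.map_isCycle_iff_of_injective f.symm.injective).mpr hc)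

lemma support_sup (A B : G.Subgraph) : (A ⊔ B).support = A.support ∪ B.support := by
  ext z
  simp only [Subgraph.mem_support, Subgraph.sup_adj, Set.mem_union]
  constructor
  · rintro ⟨w, h | h⟩
    · exact Or.inl ⟨w, h⟩
    · exact Or.inr ⟨w, h⟩
  · rintro (⟨w, h⟩ | ⟨w, h⟩) <;> exact ⟨w, by tauto⟩

lemma edgeSet_map_ncard {W : Type} {H : SimpleGraph W} (f : G →g H)
    (hf : Function.Injective f) (M : G.Subgraph) :
    (M.map f).edgeSet.ncard = M.edgeSet.ncard := by
  have himg : (M.map f).edgeSet = Sym2.map f '' M.edgeSet := by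
    ext e
    induction e with
    | _ a b =>
      simp only [Subgraph.mem_edgeSet, Subgraph.map_adj, Relation.Map, Set.mem_image]
      constructor
      · rintro ⟨a', b', hab, rfl, rfl⟩
        exact ⟨s(a', b'), hab, rfl⟩
      · rintro ⟨e', he', hmap⟩
        induction e' with
        | _ x y =>
          simp only [Sym2.map_pair_eq, Sym2.eq, Sym2.rel_iff', Prod.mk.injEq, Prod.swap_prod_mk] at hmap
          rcases hmap with ⟨rfl, rfl⟩ | ⟨rfl, rfl⟩
          · exact ⟨x, y, he', rfl, rfl⟩
          · exact ⟨y, x, he'.symm, rfl, rfl⟩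
  rw [himg]
  exact Set.ncard_image_of_injective _ (Sym2.map.injective hf)

lemma endpoints_mem_support_of_mem_edgeSet {M : G.Subgraph} {x y : V}
    (h : s(x, y) ∈ M.edgeSet) : x ∈ M.support ∧ y ∈ M.support := by
  rw [Subgraph.mem_edgeSet] at h
  exact ⟨⟨y, h⟩, ⟨x, h.symm⟩⟩


variable {V : Type} (G : SimpleGraph V) (v : V)

/-- `x` and `y` are connected by a walk avoiding `v`. -/
def Rel (x y : V) : Prop := x ≠ v ∧ y ≠ v ∧ ∃ p : G.Walk x y, v ∉ p.support

variable {G v}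

lemma Rel.symm {x y : V} (h : Rel G v x y) : Rel G v y x := by
  obtain ⟨hx, hy, p, hp⟩ := h
  exact ⟨hy, hx, p.reverse, by simpa using hp⟩

lemma Rel.trans {x y z : V} (h : Rel G v x y) (h' : Rel G v y z) : Rel G v x z := by
  obtain ⟨hx, hy, p, hp⟩ := h
  obtain ⟨-, hz, q, hq⟩ := h'
  exact ⟨hx, hz, p.append q, by simp [Walk.mem_support_append_iff]; tauto⟩

lemma rel_refl {x : V} (hx : x ≠ v) : Rel G v x x := ⟨hx, hx, .nil, by simpa using hx.symm⟩

lemma rel_of_adj {x y : V} (hx : x ≠ v) (hy : y ≠ v) (h : G.Adj x y) : Rel G v x y :=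
  ⟨hx, hy, .cons h .nil, by simp [hx.symm, hy.symm, Walk.support_cons]⟩

variable (G v) in
/-- The class of `x` in `G - v`. -/
def cls (x : V) : Set V := {y | Rel G v x y}

lemma mem_cls_self {x : V} (hx : x ≠ v) : x ∈ cls G v x := rel_refl hx

lemma not_mem_cls {x : V} : v ∉ cls G v x := fun h => h.2.1 rfl

lemma ne_v_of_mem_cls {x y : V} (h : y ∈ cls G v x) : y ≠ v := h.2.1

lemma cls_eq_of_mem {x y : V} (h : y ∈ cls G v x) : cls G v y = cls G v x := by
  ext z
  exact ⟨fun hz => (h : Rel G v x y).trans hz, fun hz => (h : Rel G v x y).symm.trans hz⟩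

lemma cls_closed_adj {x y z : V} (hy : y ∈ cls G v x) (h : G.Adj y z) (hz : z ≠ v) :
    z ∈ cls G v x := (hy : Rel G v x y).trans (rel_of_adj (ne_v_of_mem_cls hy) hz h)

/-- Every vertex on a `v`-avoiding walk is in the class of the start. -/
lemma walk_support_subset_cls :
    ∀ {a b : V} (p : G.Walk a b), v ∉ p.support → a ≠ v →
      ∀ z ∈ p.support, z ∈ cls G v a := by
  intro a b p
  induction p with
  | nil => intro hv ha z hz; simp at hz; subst hz; exact mem_cls_self ha
  | @cons a c b hadj p ih =>
    intro hv ha z hz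
    have hc : c ≠ v := fun h => hv (by simp [← h, Walk.support_cons, p.start_mem_support])
    have hvp : v ∉ p.support := fun h => hv (by simp [Walk.support_cons, h])
    rcases List.mem_cons.mp (by simpa using hz) with rfl | h
    · exact mem_cls_self ha
    · exact (rel_of_adj ha hc hadj).trans (ih hvp hc z h)

variable (G v) in
def IsCls (S : Set V) : Prop := ∃ x, x ≠ v ∧ S = cls G v x

lemma cls_mem_eq {S : Set V} (hS : IsCls G v S) {y : V} (hy : y ∈ S) : cls G v y = S := by
  obtain ⟨x, hx, rfl⟩ := hS
  exact cls_eq_of_mem hy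

/-- If the only neighbor of `w` is `v`, then the class of `w` is `{w}`. -/
lemma cls_eq_singleton (hw : ∀ z, G.Adj w z → z = v) (hwv : w ≠ v) :
    cls G v w = {w} := by
  ext y
  simp only [Set.mem_singleton_iff]
  constructor
  · rintro ⟨-, hy, p, hp⟩
    cases p with
    | nil => rfl
    | @cons _ c _ hadj q =>
      exfalso
      apply hp
      have : c = v := hw _ hadj
      subst this
      simp [Walk.support_cons]
  · rintro rfl; exact mem_cls_self hwv


lemma K23_adj : K23.Adj (Sum.inl 0) (Sum.inr 0) := by simp [K23]
lemma K4plus_adj : K4plus.Adj 0 2 := by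
  rw [K4plus, SimpleGraph.fromRel_adj]
  exact ⟨by decide, Or.inl (by decide)⟩
lemma K33_adj : K33.Adj (Sum.inl 0) (Sum.inr 0) := by simp [K33]

lemma card_K23 : Nat.card (Fin 2 ⊕ Fin 3) = 5 := by simp
lemma card_K4plus : Nat.card (Fin 5) = 5 := by simp
lemma card_K33 : Nat.card (Fin 3 ⊕ Fin 3) = 6 := by simp

lemma K33_three_nbrs (z : Fin 3 ⊕ Fin 3) :
    ∃ a b c : Fin 3 ⊕ Fin 3, a ≠ b ∧ a ≠ c ∧ b ≠ c ∧ K33.Adj z a ∧ K33.Adj z b ∧ K33.Adj z c := by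
  cases z with
  | inl i => exact ⟨Sum.inr 0, Sum.inr 1, Sum.inr 2, by decide, by decide, by decide,
      by simp [K33], by simp [K33], by simp [K33]⟩
  | inr i => exact ⟨Sum.inl 0, Sum.inl 1, Sum.inl 2, by decide, by decide, by decide,
      by simp [K33], by simp [K33], by simp [K33]⟩

variable {V : Type} [Finite V] {G : SimpleGraph V}

/-- From an iso with K33 and an extra neighbor `v` outside `S`, the vertex `y` has ≥ 4 neighbors. -/
lemma K33_degree_contra {S : Set V} (f : G.induce S ≃g K33) {y v : V} (hy : y ∈ S)
    (hv : v ∉ S) (hadj : G.Adj y v) (hsub : (G.neighborSet y).ncard ≤ 3) : False := by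
  obtain ⟨a, b, c, hab, hac, hbc, ha, hb, hc⟩ := K33_three_nbrs (f ⟨y, hy⟩)
  set pa : V := (f.symm a : ↥S).1 with hpa
  set pb : V := (f.symm b : ↥S).1 with hpb
  set pc : V := (f.symm c : ↥S).1 with hpc
  have hGa : G.Adj y pa := by
    have : (G.induce S).Adj ⟨y, hy⟩ (f.symm a) := by
      rw [← f.map_adj_iff]; simpa using ha
    exact this
  have hGb : G.Adj y pb := by
    have : (G.induce S).Adj ⟨y, hy⟩ (f.symm b) := by
      rw [← f.map_adj_iff]; simpa using hb
    exact this
  have hGc : G.Adj y pc := by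
    have : (G.induce S).Adj ⟨y, hy⟩ (f.symm c) := by
      rw [← f.map_adj_iff]; simpa using hc
    exact this
  have hmemS : pa ∈ S ∧ pb ∈ S ∧ pc ∈ S := ⟨(f.symm a).2, (f.symm b).2, (f.symm c).2⟩
  have hne : pa ≠ pb ∧ pa ≠ pc ∧ pb ≠ pc := by
    refine ⟨?_, ?_, ?_⟩ <;>
    · intro h
      first
      | exact hab (by simpa using f.symm.injective (Subtype.val_injective h))
      | exact hac (by simpa using f.symm.injective (Subtype.val_injective h))
      | exact hbc (by simpa using f.symm.injective (Subtype.val_injective h))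
  clear_value pa pb pc
  have hsubN : ({pa, pb, pc, v} : Set V) ⊆ G.neighborSet y := by
    intro z hz
    rcases hz with rfl | rfl | rfl | rfl
    · exact hGa
    · exact hGb
    · exact hGc
    · exact hadj
  have hvne : v ∉ ({pa, pb, pc} : Set V) := by
    rintro (rfl | rfl | rfl)
    · exact hv hmemS.1
    · exact hv hmemS.2.1
    · exact hv hmemS.2.2
  have hcard : ({pa, pb, pc, v} : Set V).ncard = 4 := by
    rw [Set.ncard_insert_of_notMem (by
      simp only [Set.mem_insert_iff, Set.mem_singleton_iff]
      rintro (rfl | rfl | rfl)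
      · exact hne.1 rfl
      · exact hne.2.1 rfl
      · exact hv hmemS.1)]
    rw [Set.ncard_insert_of_notMem (by
      simp only [Set.mem_insert_iff, Set.mem_singleton_iff]
      rintro (rfl | rfl)
      · exact hne.2.2 rfl
      · exact hv hmemS.2.1)]
    rw [Set.ncard_insert_of_notMem (by
      simp only [Set.mem_singleton_iff]
      rintro rfl
      · exact hv hmemS.2.2)]
    simp
  have h4 : 4 ≤ (G.neighborSet y).ncard := by
    rw [← hcard]
    exact Set.ncard_le_ncard hsubN (Set.toFinite _)
  omega


section Main
variable (G : SimpleGraph V) (v : V)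

def SpcSet : Set (Set V) :=
  {S | IsCls G v S ∧ (Nonempty ((G.induce S) ≃g K23) ∨ Nonempty ((G.induce S) ≃g K4plus) ∨
    Nonempty ((G.induce S) ≃g K33))}

def Wset : Set V := {w | G.neighborSet w = {v}}

def Dset : Set V := {v} ∪ Wset G v ∪ ⋃₀ SpcSet G v

variable {G v}

lemma spc_iso {S : Set V} (hS : S ∈ SpcSet G v) :
    Nonempty ((G.induce S) ≃g K23) ∨ Nonempty ((G.induce S) ≃g K4plus) ∨
      Nonempty ((G.induce S) ≃g K33) := hS.2

lemma spc_ncard {S : Set V} (hS : S ∈ SpcSet G v) : S.ncard = 5 ∨ S.ncard = 6 := by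
  rcases spc_iso hS with h | h | h <;> obtain ⟨f⟩ := h
  · left; rw [← Nat.card_coe_set_eq, Nat.card_congr f.toEquiv]; simp
  · left; rw [← Nat.card_coe_set_eq, Nat.card_congr f.toEquiv]; simp
  · right; rw [← Nat.card_coe_set_eq, Nat.card_congr f.toEquiv]; simp

lemma spc_ne_v {S : Set V} (hS : S ∈ SpcSet G v) {y : V} (hy : y ∈ S) : y ≠ v := by
  obtain ⟨x, hx, rfl⟩ := hS.1
  exact ne_v_of_mem_cls hy

lemma cls_of_mem_spc {S : Set V} (hS : S ∈ SpcSet G v) {y : V} (hy : y ∈ S) : cls G v y = S :=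
  cls_mem_eq hS.1 hy

lemma wset_not_mem_spc {w : V} (hw : w ∈ Wset G v) {S : Set V} (hS : S ∈ SpcSet G v) :
    w ∉ S := by
  intro hmem
  have hwv : w ≠ v := spc_ne_v hS hmem
  have h1 : cls G v w = S := cls_of_mem_spc hS hmem
  have h2 : cls G v w = {w} := by
    refine cls_eq_singleton ?_ hwv
    intro z hz
    have : z ∈ G.neighborSet w := hz
    rw [hw] at this
    exact this
  rw [h2] at h1
  rcases spc_ncard hS with h | h <;> rw [← h1] at h <;> simp [Set.ncard_singleton] at h

lemma v_not_mem_spc {S : Set V} (hS : S ∈ SpcSet G v) : v ∉ S := fun h => spc_ne_v hS h rfl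

lemma spc_disjoint {S T : Set V} (hS : S ∈ SpcSet G v) (hT : T ∈ SpcSet G v) (hne : S ≠ T) :
    Disjoint S T := by
  rw [Set.disjoint_left]
  intro y hyS hyT
  exact hne ((cls_of_mem_spc hS hyS).symm.trans (cls_of_mem_spc hT hyT))

lemma mem_Dset_cases {z : V} (hz : z ∈ Dset G v) :
    z = v ∨ z ∈ Wset G v ∨ ∃ S ∈ SpcSet G v, z ∈ S := by
  rcases hz with (rfl | h) | ⟨S, hS, hzS⟩
  · left; rfl
  · right; left; exact h
  · right; right; exact ⟨S, hS, hzS⟩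

lemma v_mem_Dset : v ∈ Dset G v := Or.inl (Or.inl rfl)

/-- An edge inside each special class. -/
lemma spc_exists_edge {S : Set V} (hS : S ∈ SpcSet G v) :
    ∃ x y : V, x ∈ S ∧ y ∈ S ∧ G.Adj x y := by
  rcases spc_iso hS with h | h | h <;> obtain ⟨f⟩ := h
  · refine ⟨(f.symm (Sum.inl 0) : ↥S).1, (f.symm (Sum.inr 0) : ↥S).1,
      (f.symm _).2, (f.symm _).2, ?_⟩
    have : (G.induce S).Adj (f.symm (Sum.inl 0)) (f.symm (Sum.inr 0)) := by
      rw [← f.map_adj_iff]; simpa using K23_adj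
    exact this
  · refine ⟨(f.symm 0 : ↥S).1, (f.symm 2 : ↥S).1, (f.symm _).2, (f.symm _).2, ?_⟩
    have : (G.induce S).Adj (f.symm 0) (f.symm 2) := by
      rw [← f.map_adj_iff]; simpa using K4plus_adj
    exact this
  · refine ⟨(f.symm (Sum.inl 0) : ↥S).1, (f.symm (Sum.inr 0) : ↥S).1,
      (f.symm _).2, (f.symm _).2, ?_⟩
    have : (G.induce S).Adj (f.symm (Sum.inl 0)) (f.symm (Sum.inr 0)) := by
      rw [← f.map_adj_iff]; simpa using K33_adj
    exact this

end Main

section Comp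
variable {G : SimpleGraph V} {v : V}

lemma image_supp_isCls (c : (G.induce (Dset G v)ᶜ).ConnectedComponent) :
    ∃ x : V, x ≠ v ∧ Subtype.val '' c.supp = cls G v x := by
  obtain ⟨x, hx⟩ := c.exists_rep
  have hxD : (x : V) ∉ Dset G v := x.2
  have hxv : (x : V) ≠ v := fun h => hxD (by rw [h]; exact v_mem_Dset)
  refine ⟨x, hxv, ?_⟩
  apply Set.eq_of_subset_of_subset
  · rintro _ ⟨y', hy', rfl⟩
    have hy'v : (y' : V) ≠ v := fun h => y'.2 (by rw [h]; exact v_mem_Dset)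
    have hreach : (G.induce (Dset G v)ᶜ).Reachable y' x := by
      rw [ConnectedComponent.mem_supp_iff, ← hx] at hy'
      exact ConnectedComponent.exact hy'
    obtain ⟨w⟩ := hreach
    have hWv : v ∉ (w.map (Embedding.induce (Dset G v)ᶜ).toHom).support := by
      rw [Walk.support_map]
      rintro hmem
      obtain ⟨z', hz', hzeq⟩ := List.mem_map.mp hmem
      exact z'.2 (by rw [show (z' : V) = v from hzeq]; exact v_mem_Dset)
    exact (Rel.symm ⟨hy'v, hxv, w.map (Embedding.induce (Dset G v)ᶜ).toHom, hWv⟩ :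
      Rel G v (x : V) (y' : V))
  · intro y hy
    obtain ⟨hxv', hyv, p, hp⟩ := (hy : Rel G v (x : V) y)
    have hsupp : ∀ z ∈ p.support, z ∈ (Dset G v)ᶜ := by
      intro z hz hzD
      rcases mem_Dset_cases hzD with rfl | hzW | ⟨S, hS, hzS⟩
      · exact hp hz
      · by_cases hzx : z = (x : V)
        · exact hxD (hzx ▸ hzD)
        · obtain ⟨w', hw', hadj⟩ := exists_adj_mem_of_mem_support_ne_start p z hz hzx
          have : w' ∈ G.neighborSet z := hadj
          rw [(hzW : G.neighborSet z = {v})] at this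
          exact hp (this ▸ hw')
      · have hzv : z ≠ v := spc_ne_v hS hzS
        have hrel : z ∈ cls G v (x : V) := walk_support_subset_cls p hp hxv z hz
        have h1 : cls G v z = cls G v (x : V) := cls_eq_of_mem hrel
        have h2 : cls G v z = S := cls_of_mem_spc hS hzS
        have : (x : V) ∈ S := by rw [← h2, h1]; exact mem_cls_self hxv
        exact hxD (Or.inr ⟨S, hS, this⟩)
    obtain ⟨q, hq⟩ := exists_induce_walk p hsupp
    refine ⟨⟨y, hsupp y p.end_mem_support⟩, ?_, rfl⟩
    rw [ConnectedComponent.mem_supp_iff, ← hx]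
    apply ConnectedComponent.sound
    have : (⟨(x : V), hsupp _ p.start_mem_support⟩ : ↥(Dset G v)ᶜ) = x := Subtype.ext rfl
    exact (this ▸ q.reverse.reachable :)

lemma comp_not_special (c : (G.induce (Dset G v)ᶜ).ConnectedComponent)
    (h : Nonempty (((G.induce (Dset G v)ᶜ).induce c.supp) ≃g K23) ∨
         Nonempty (((G.induce (Dset G v)ᶜ).induce c.supp) ≃g K4plus) ∨
         Nonempty (((G.induce (Dset G v)ᶜ).induce c.supp) ≃g K33)) : False := by
  obtain ⟨x, hxv, hcls⟩ := image_supp_isCls c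
  have hiso := (doubleInduceIso (G := G) ((Dset G v)ᶜ) c.supp).symm
  have hmem : Subtype.val '' c.supp ∈ SpcSet G v := by
    refine ⟨⟨x, hxv, hcls⟩, ?_⟩
    rcases h with hf | hf | hf <;> obtain ⟨f⟩ := hf
    · exact Or.inl ⟨hiso.trans f⟩
    · exact Or.inr (Or.inl ⟨hiso.trans f⟩)
    · exact Or.inr (Or.inr ⟨hiso.trans f⟩)
  obtain ⟨z, hz⟩ := c.exists_rep
  have hzsupp : z ∈ c.supp := by rw [ConnectedComponent.mem_supp_iff]; exact hz
  exact z.2 (Or.inr ⟨_, hmem, ⟨z, hzsupp, rfl⟩⟩)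

lemma kappa_G'_K23 : kappa (G.induce (Dset G v)ᶜ) K23 = 0 := by
  haveI : IsEmpty {c : (G.induce (Dset G v)ᶜ).ConnectedComponent //
      Nonempty (((G.induce (Dset G v)ᶜ).induce c.supp) ≃g K23)} :=
    ⟨fun ⟨c, hc⟩ => comp_not_special c (Or.inl hc)⟩
  exact Nat.card_of_isEmpty

lemma kappa_G'_K4plus : kappa (G.induce (Dset G v)ᶜ) K4plus = 0 := by
  haveI : IsEmpty {c : (G.induce (Dset G v)ᶜ).ConnectedComponent //
      Nonempty (((G.induce (Dset G v)ᶜ).induce c.supp) ≃g K4plus)} :=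
    ⟨fun ⟨c, hc⟩ => comp_not_special c (Or.inr (Or.inl hc))⟩
  exact Nat.card_of_isEmpty

lemma kappa_G'_K33 : kappa (G.induce (Dset G v)ᶜ) K33 = 0 := by
  haveI : IsEmpty {c : (G.induce (Dset G v)ᶜ).ConnectedComponent //
      Nonempty (((G.induce (Dset G v)ᶜ).induce c.supp) ≃g K33)} :=
    ⟨fun ⟨c, hc⟩ => comp_not_special c (Or.inr (Or.inr hc))⟩
  exact Nat.card_of_isEmpty

end Comp

section Count
variable {G : SimpleGraph V} {v : V}

lemma walk_support_subset_closed {S : Set V} (hcl : ∀ z z', z ∈ S → G.Adj z z' → z' ∈ S) :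
    ∀ {a b : V} (p : G.Walk a b), a ∈ S → ∀ z ∈ p.support, z ∈ S := by
  intro a b p
  induction p with
  | nil => intro ha z hz; simp at hz; subst hz; exact ha
  | @cons a c b hadj p ih =>
    intro ha z hz
    rcases List.mem_cons.mp (by simpa using hz) with rfl | h
    · exact ha
    · exact ih (hcl _ _ ha hadj) z h

variable (G v) in
def OldS : Set (Set V) := {S | S ∈ SpcSet G v ∧ ∀ y ∈ S, ¬ G.Adj v y}

lemma spc_nonempty {S : Set V} (hS : S ∈ SpcSet G v) : ∃ x, x ∈ S := by
  obtain ⟨x, hx, rfl⟩ := hS.1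
  exact ⟨x, mem_cls_self hx⟩

lemma old_closed {S : Set V} (hS : S ∈ OldS G v) {z z' : V} (hz : z ∈ S) (h : G.Adj z z') :
    z' ∈ S := by
  have hzv : z ≠ v := spc_ne_v hS.1 hz
  by_cases hz'v : z' = v
  · exact absurd (hz'v ▸ h).symm (hS.2 z hz)
  · have : cls G v z = S := cls_of_mem_spc hS.1 hz
    rw [← this]
    exact cls_closed_adj (mem_cls_self hzv) h hz'v

lemma old_comp_supp {S : Set V} (hS : S ∈ OldS G v) {x : V} (hx : x ∈ S) :
    (G.connectedComponentMk x).supp = S := by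
  apply Set.eq_of_subset_of_subset
  · intro y hy
    rw [ConnectedComponent.mem_supp_iff] at hy
    obtain ⟨p⟩ := (ConnectedComponent.exact hy : G.Reachable y x)
    exact walk_support_subset_closed (fun z z' hz h => old_closed hS hz h) p.reverse
      hx y (by simp)
  · intro y hy
    rw [ConnectedComponent.mem_supp_iff]
    have h1 : cls G v x = S := cls_of_mem_spc hS.1 hx
    have : y ∈ cls G v x := h1 ▸ hy
    obtain ⟨-, -, p, -⟩ := (this : Rel G v x y)
    exact ConnectedComponent.sound p.reverse.reachable

variable (G v) in
def O23 : Set (Set V) := {S | S ∈ OldS G v ∧ Nonempty ((G.induce S) ≃g K23)}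
variable (G v) in
def O4 : Set (Set V) :=
  {S | S ∈ OldS G v ∧ Nonempty ((G.induce S) ≃g K4plus) ∧ ¬ Nonempty ((G.induce S) ≃g K23)}
variable (G v) in
def O33 : Set (Set V) := {S | S ∈ OldS G v ∧ Nonempty ((G.induce S) ≃g K33)}

/-- Generic: each family of old special classes injects into the components counted by kappa. -/
lemma old_le_kappa {A : Type} (X : SimpleGraph A) (F : Set (Set V))
    (hF : ∀ S ∈ F, S ∈ OldS G v ∧ Nonempty ((G.induce S) ≃g X)) :
    F.ncard ≤ kappa G X := by
  rw [← Nat.card_coe_set_eq]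
  refine Nat.card_le_card_of_injective (fun S =>
    ⟨G.connectedComponentMk ((spc_nonempty (hF S.1 S.2).1.1).choose), ?_⟩) ?_
  · rw [show (G.connectedComponentMk ((spc_nonempty (hF S.1 S.2).1.1).choose)).supp = (S : Set V)
      from old_comp_supp (hF S.1 S.2).1 (spc_nonempty (hF S.1 S.2).1.1).choose_spec]
    exact (hF S.1 S.2).2
  · intro S T h
    simp only [Subtype.mk.injEq] at h
    have hs := old_comp_supp (hF S.1 S.2).1 (spc_nonempty (hF S.1 S.2).1.1).choose_spec
    have ht := old_comp_supp (hF T.1 T.2).1 (spc_nonempty (hF T.1 T.2).1.1).choose_spec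
    exact Subtype.ext (by rw [← hs, ← ht, h])

lemma new_ncard (hsub : Subcubic G) {S : Set V} (hS : S ∈ SpcSet G v)
    (hnew : ∃ y ∈ S, G.Adj v y) : S.ncard = 5 := by
  obtain ⟨y, hyS, hadj⟩ := hnew
  have hnot33 : ¬ Nonempty ((G.induce S) ≃g K33) := by
    rintro ⟨f⟩
    exact K33_degree_contra f hyS (v_not_mem_spc hS) hadj.symm (hsub y)
  rcases spc_iso hS with hf | hf | hf <;> [skip; skip; exact absurd hf hnot33] <;>
    obtain ⟨f⟩ := hf <;>
    rw [← Nat.card_coe_set_eq, Nat.card_congr f.toEquiv] <;> simp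

lemma new_has_nbr {S : Set V} (hS : S ∈ SpcSet G v) (hnot : S ∉ OldS G v) :
    ∃ y ∈ S, G.Adj v y := by
  by_contra h
  push_neg at h
  exact hnot ⟨hS, h⟩

lemma wt_sum_le (hsub : Subcubic G) :
    ∀ (F : Set (Set V)), F.Finite → F ⊆ SpcSet G v →
      (⋃₀ F).ncard ≤ 4 * F.ncard + ((O23 G v ∩ F).ncard + (O4 G v ∩ F).ncard
        + 2 * (O33 G v ∩ F).ncard + ((SpcSet G v \ OldS G v) ∩ F).ncard) := by
  intro F hFfin
  refine Set.Finite.induction_on (motive := fun F _ => F ⊆ SpcSet G v →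
      (⋃₀ F).ncard ≤ 4 * F.ncard + ((O23 G v ∩ F).ncard + (O4 G v ∩ F).ncard
        + 2 * (O33 G v ∩ F).ncard + ((SpcSet G v \ OldS G v) ∩ F).ncard)) F hFfin
    (fun _ => by simp) ?_
  intro S F hSF hFfin ih hsubF
  · skip
    have hS : S ∈ SpcSet G v := hsubF (Set.mem_insert _ _)
    have hF' : F ⊆ SpcSet G v := fun T hT => hsubF (Set.mem_insert_of_mem _ hT)
    have hmain := ih hF'
    have hUnion : (⋃₀ insert S F).ncard ≤ S.ncard + (⋃₀ F).ncard := by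
      rw [Set.sUnion_insert]
      exact Set.ncard_union_le _ _
    have hincr : ∀ X : Set (Set V), S ∈ X → (X ∩ insert S F).ncard = (X ∩ F).ncard + 1 := by
      intro X hSX
      rw [show X ∩ insert S F = insert S (X ∩ F) by
        ext T
        simp only [Set.mem_inter_iff, Set.mem_insert_iff]
        constructor
        · rintro ⟨hX, rfl | hF⟩
          · exact Or.inl rfl
          · exact Or.inr ⟨hX, hF⟩
        · rintro (rfl | ⟨hX, hF⟩)
          · exact ⟨hSX, Or.inl rfl⟩
          · exact ⟨hX, Or.inr hF⟩]
      rw [Set.ncard_insert_of_notMem (fun h => hSF h.2)]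
    have hmono : ∀ X : Set (Set V), (X ∩ F).ncard ≤ (X ∩ insert S F).ncard :=
      fun X => Set.ncard_le_ncard (Set.inter_subset_inter_right _ (Set.subset_insert _ _))
        (Set.toFinite _)
    have hcins : (insert S F).ncard = F.ncard + 1 := Set.ncard_insert_of_notMem hSF
    by_cases h33 : S ∈ O33 G v
    · have hc : S.ncard = 6 := by
        obtain ⟨f⟩ := h33.2
        rw [← Nat.card_coe_set_eq, Nat.card_congr f.toEquiv]; simp
      have h1 := hincr (O33 G v) h33
      have h2 := hmono (O23 G v)
      have h3 := hmono (O4 G v)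
      have h4 := hmono (SpcSet G v \ OldS G v)
      omega
    · have hc : S.ncard = 5 := by
        by_cases hold : S ∈ OldS G v
        · rcases spc_iso hS with hf | hf | hf
          · obtain ⟨f⟩ := hf
            rw [← Nat.card_coe_set_eq, Nat.card_congr f.toEquiv]; simp
          · obtain ⟨f⟩ := hf
            rw [← Nat.card_coe_set_eq, Nat.card_congr f.toEquiv]; simp
          · exact absurd ⟨hold, hf⟩ h33
        · exact new_ncard hsub hS (new_has_nbr hS hold)
      have hclass : S ∈ O23 G v ∨ S ∈ O4 G v ∨ S ∈ SpcSet G v \ OldS G v := by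
        by_cases hold : S ∈ OldS G v
        · by_cases h23 : Nonempty ((G.induce S) ≃g K23)
          · exact Or.inl ⟨hold, h23⟩
          · rcases spc_iso hS with hf | hf | hf
            · exact absurd hf h23
            · exact Or.inr (Or.inl ⟨hold, hf, h23⟩)
            · exact absurd ⟨hold, hf⟩ h33
        · exact Or.inr (Or.inr ⟨hS, hold⟩)
      rcases hclass with hcl | hcl | hcl
      · have h1 := hincr (O23 G v) hcl
        have h2 := hmono (O4 G v)
        have h3 := hmono (O33 G v)
        have h4 := hmono (SpcSet G v \ OldS G v)
        omega
      · have h1 := hincr (O4 G v) hcl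
        have h2 := hmono (O23 G v)
        have h3 := hmono (O33 G v)
        have h4 := hmono (SpcSet G v \ OldS G v)
        omega
      · have h1 := hincr (SpcSet G v \ OldS G v) hcl
        have h2 := hmono (O23 G v)
        have h3 := hmono (O4 G v)
        have h4 := hmono (O33 G v)
        omega

lemma wset_new_le (hsub : Subcubic G) :
    (Wset G v).ncard + (SpcSet G v \ OldS G v).ncard ≤ 3 := by
  classical
  set g : Set V → V := fun S => if h : ∃ y ∈ S, G.Adj v y then h.choose else v with hg
  have hgmem : ∀ S ∈ SpcSet G v \ OldS G v, g S ∈ S ∧ G.Adj v (g S) := by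
    intro S hS
    have h := new_has_nbr hS.1 hS.2
    rw [hg]
    simp only [dif_pos h]
    exact ⟨h.choose_spec.1, h.choose_spec.2⟩
  have hinj : Set.InjOn g (SpcSet G v \ OldS G v) := by
    intro S hS T hT heq
    have h1 := (hgmem S hS).1
    have h2 := (hgmem T hT).1
    rw [heq] at h1
    exact (cls_of_mem_spc hS.1 h1).symm.trans (cls_of_mem_spc hT.1 h2)
  have hdisj : Disjoint (Wset G v) (g '' (SpcSet G v \ OldS G v)) := by
    rw [Set.disjoint_left]
    rintro w hw ⟨S, hS, rfl⟩
    exact wset_not_mem_spc hw hS.1 (hgmem S hS).1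
  have hsubN : Wset G v ∪ g '' (SpcSet G v \ OldS G v) ⊆ G.neighborSet v := by
    rintro z (hz | ⟨S, hS, rfl⟩)
    · have : (v : V) ∈ G.neighborSet z := by rw [(hz : G.neighborSet z = {v})]; rfl
      exact (this : G.Adj z v).symm
    · exact (hgmem S hS).2
  have h1 : (Wset G v ∪ g '' (SpcSet G v \ OldS G v)).ncard
      = (Wset G v).ncard + (g '' (SpcSet G v \ OldS G v)).ncard :=
    Set.ncard_union_eq hdisj (Set.toFinite _) (Set.toFinite _)
  have h2 : (g '' (SpcSet G v \ OldS G v)).ncard = (SpcSet G v \ OldS G v).ncard :=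
    Set.ncard_image_of_injOn hinj
  have h3 : (Wset G v ∪ g '' (SpcSet G v \ OldS G v)).ncard ≤ (G.neighborSet v).ncard :=
    Set.ncard_le_ncard hsubN (Set.toFinite _)
  have h4 := hsub v
  omega

end Count

section DBound
variable {G : SimpleGraph V} {v : V}

lemma O23_subset : O23 G v ⊆ SpcSet G v := fun S hS => hS.1.1
lemma O4_subset : O4 G v ⊆ SpcSet G v := fun S hS => hS.1.1
lemma O33_subset : O33 G v ⊆ SpcSet G v := fun S hS => hS.1.1

lemma Dset_ncard_le (hsub : Subcubic G) :
    (Dset G v).ncard ≤ 4 + 4 * (SpcSet G v).ncard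
      + (kappa G K23 + kappa G K4plus + 2 * kappa G K33) := by
  have h1 : (Dset G v).ncard ≤ 1 + (Wset G v).ncard + (⋃₀ SpcSet G v).ncard := by
    calc (Dset G v).ncard ≤ ({v} ∪ Wset G v : Set V).ncard + (⋃₀ SpcSet G v).ncard :=
          Set.ncard_union_le _ _
    _ ≤ (({v} : Set V).ncard + (Wset G v).ncard) + (⋃₀ SpcSet G v).ncard :=
          Nat.add_le_add_right (Set.ncard_union_le _ _) _
    _ = 1 + (Wset G v).ncard + (⋃₀ SpcSet G v).ncard := by rw [Set.ncard_singleton]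
  have h2 := wt_sum_le hsub (SpcSet G v) (Set.toFinite _) subset_rfl
  rw [Set.inter_eq_self_of_subset_left O23_subset,
      Set.inter_eq_self_of_subset_left O4_subset,
      Set.inter_eq_self_of_subset_left O33_subset,
      Set.inter_eq_self_of_subset_left (Set.diff_subset)] at h2
  have h3 : (O23 G v).ncard ≤ kappa G K23 :=
    old_le_kappa K23 _ (fun S hS => ⟨hS.1, hS.2⟩)
  have h4 : (O4 G v).ncard ≤ kappa G K4plus :=
    old_le_kappa K4plus _ (fun S hS => ⟨hS.1, hS.2.1⟩)
  have h5 : (O33 G v).ncard ≤ kappa G K33 :=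
    old_le_kappa K33 _ (fun S hS => ⟨hS.1, hS.2⟩)
  have h6 := wset_new_le (v := v) hsub
  omega

end DBound

section Matching
variable {G : SimpleGraph V} {v : V}

lemma support_bot' : (⊥ : G.Subgraph).support = ∅ := by
  ext z
  simp only [Subgraph.mem_support, Set.mem_empty_iff_false, iff_false, not_exists]
  exact fun w h => Subgraph.not_bot_adj h


lemma bot_acyclic_matching : IsAcyclicMatching G ⊥ := by
  constructor
  · intro z hz
    exact absurd hz (by simp)
  · intro z c hc
    exact absurd z.2 (by simp [support_bot'])

lemma nu_ge (M : G.Subgraph) (h : IsAcyclicMatching G M) :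
    M.edgeSet.ncard ≤ acyclicMatchingNumber G := by
  apply le_csSup
  · refine ⟨(Set.univ : Set (Sym2 V)).ncard, ?_⟩
    rintro k ⟨N, -, rfl⟩
    exact Set.ncard_le_ncard (Set.subset_univ _) (Set.toFinite _)
  · exact ⟨M, h, rfl⟩

lemma exists_max_acyclic_matching :
    ∃ M : G.Subgraph, IsAcyclicMatching G M ∧ M.edgeSet.ncard = acyclicMatchingNumber G := by
  have h : acyclicMatchingNumber G ∈
      {k | ∃ M : G.Subgraph, IsAcyclicMatching G M ∧ M.edgeSet.ncard = k} := by
    apply Nat.sSup_mem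
    · exact ⟨0, ⊥, bot_acyclic_matching, by simp⟩
    · refine ⟨(Set.univ : Set (Sym2 V)).ncard, ?_⟩
      rintro k ⟨N, -, rfl⟩
      exact Set.ncard_le_ncard (Set.subset_univ _) (Set.toFinite _)
  exact h

lemma spc_inter_sUnion_empty {F : Set (Set V)} (hF : F ⊆ SpcSet G v) {S : Set V}
    (hS : S ∈ SpcSet G v) (hSF : S ∉ F) : ∀ z, z ∈ S → z ∈ ⋃₀ F → False := by
  rintro z hzS ⟨T, hT, hzT⟩
  exact hSF (((cls_of_mem_spc hS hzS).symm.trans (cls_of_mem_spc (hF hT) hzT)) ▸ hT)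

lemma edge_pack :
    ∀ (F : Set (Set V)), F.Finite → F ⊆ SpcSet G v →
      ∃ M : G.Subgraph, M.IsMatching ∧ M.support ⊆ ⋃₀ F ∧ M.edgeSet.ncard = F.ncard ∧
        ∀ S ∈ F, ∃ a b : V, ∀ z ∈ M.support ∩ S, z = a ∨ z = b := by
  intro F hFfin
  refine Set.Finite.induction_on (motive := fun F _ => F ⊆ SpcSet G v →
      ∃ M : G.Subgraph, M.IsMatching ∧ M.support ⊆ ⋃₀ F ∧ M.edgeSet.ncard = F.ncard ∧
        ∀ S ∈ F, ∃ a b : V, ∀ z ∈ M.support ∩ S, z = a ∨ z = b) F hFfin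
    (fun _ => ⟨⊥, fun z hz => absurd hz (by simp), by simp [support_bot'], by simp, by simp⟩) ?_
  intro S F hSF hFfin ih hsubF
  have hS : S ∈ SpcSet G v := hsubF (Set.mem_insert _ _)
  have hF' : F ⊆ SpcSet G v := fun T hT => hsubF (Set.mem_insert_of_mem _ hT)
  obtain ⟨M', hM'match, hM'supp, hM'card, hM'pairs⟩ := ih hF'
  obtain ⟨x, y, hxS, hyS, hadj⟩ := spc_exists_edge hS
  have hdisjS : ∀ z, z ∈ S → z ∈ ⋃₀ F → False := spc_inter_sUnion_empty hF' hS hSF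
  have hsubsupp : (G.subgraphOfAdj hadj).support = {x, y} := support_subgraphOfAdj hadj
  have hdisj : Disjoint M'.support (G.subgraphOfAdj hadj).support := by
    rw [hsubsupp, Set.disjoint_right]
    rintro z (rfl | rfl) hz2
    · exact hdisjS z hxS (hM'supp hz2)
    · exact hdisjS z hyS (hM'supp hz2)
  refine ⟨M' ⊔ G.subgraphOfAdj hadj, hM'match.sup (Subgraph.IsMatching.subgraphOfAdj hadj) hdisj,
    ?_, ?_, ?_⟩
  · rw [support_sup, Set.sUnion_insert]
    rintro z (hz | hz)
    · exact Or.inr (hM'supp hz)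
    · rw [hsubsupp] at hz
      rcases hz with rfl | rfl
      · exact Or.inl hxS
      · exact Or.inl hyS
  · rw [Subgraph.edgeSet_sup, Set.ncard_union_eq ?_ (Set.toFinite _) (Set.toFinite _),
      hM'card, G.edgeSet_subgraphOfAdj, Set.ncard_singleton,
      Set.ncard_insert_of_notMem hSF]
    rw [Set.disjoint_right, G.edgeSet_subgraphOfAdj]
    rintro e rfl he'
    have hx' : x ∈ M'.support := (endpoints_mem_support_of_mem_edgeSet he').1
    exact hdisjS x hxS (hM'supp hx')
  · intro T hT
    rcases Set.mem_insert_iff.mp hT with rfl | hTF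
    · refine ⟨x, y, ?_⟩
      rintro z ⟨hz1, hz2⟩
      rw [support_sup] at hz1
      rcases hz1 with hz1 | hz1
      · exact absurd (hdisjS z hz2 (hM'supp hz1)) not_false
      · rw [hsubsupp] at hz1
        exact hz1
    · obtain ⟨a, b, hab⟩ := hM'pairs T hTF
      refine ⟨a, b, ?_⟩
      rintro z ⟨hz1, hz2⟩
      rw [support_sup] at hz1
      rcases hz1 with hz1 | hz1
      · exact hab z ⟨hz1, hz2⟩
      · rw [hsubsupp] at hz1
        have hST : S ≠ T := fun h => hSF (h ▸ hTF)
        exfalso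
        rcases hz1 with rfl | rfl
        · exact (Set.disjoint_left.mp (spc_disjoint hS (hF' hTF) hST) hxS) hz2
        · exact (Set.disjoint_left.mp (spc_disjoint hS (hF' hTF) hST) hyS) hz2

end Matching

section Final
variable {G : SimpleGraph V} {v : V}

lemma main_contra {V : Type} [Fintype V] (G : SimpleGraph V)
    (hmin : IsMinCounterexample G) (u v : V) (hdeg : (G.neighborSet u).ncard = 1)
    (huv : G.Adj u v)
    (hnc : ∀ (w : V) (c : G.Walk w w), c.IsCycle → v ∉ c.support) : False := by
  classical
  obtain ⟨hsub, hnoiso, hce, hminimal⟩ := hmin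
  -- u has unique neighbor v
  have hNu : G.neighborSet u = {v} := by
    obtain ⟨a, ha⟩ := Set.ncard_eq_one.mp hdeg
    have hva : v ∈ ({a} : Set V) := ha ▸ (huv : v ∈ G.neighborSet u)
    rw [ha, hva]
  have huW : u ∈ Wset G v := hNu
  have huD : u ∈ Dset G v := Or.inl (Or.inr huW)
  have hvD : v ∈ Dset G v := v_mem_Dset
  set D : Set V := Dset G v with hD
  set G' : SimpleGraph ↥Dᶜ := G.induce Dᶜ with hG'
  -- G' is subcubic
  have hsub' : Subcubic G' := by
    intro x
    have h1 : (G'.neighborSet x).ncard = (Subtype.val '' G'.neighborSet x).ncard :=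
      (Set.ncard_image_of_injective _ Subtype.val_injective).symm
    have h2 : Subtype.val '' G'.neighborSet x ⊆ G.neighborSet (x : V) := by
      rintro _ ⟨y, hy, rfl⟩
      exact hy
    calc (G'.neighborSet x).ncard ≤ (G.neighborSet (x : V)).ncard := by
          rw [h1]; exact Set.ncard_le_ncard h2 (Set.toFinite _)
    _ ≤ 3 := hsub _
  -- G' has no isolated vertices
  have hnoiso' : NoIsolatedVerts G' := by
    intro x
    by_contra h
    push_neg at h
    have hxv : (x : V) ≠ v := fun hh => x.2 (hh ▸ hvD)
    have hN : G.neighborSet (x : V) ⊆ {v} := by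
      intro z hz
      by_cases hzD : z ∈ D
      · rcases mem_Dset_cases hzD with rfl | hzW | ⟨S, hS, hzS⟩
        · rfl
        · exfalso
          have : (x : V) ∈ G.neighborSet z := (hz : G.Adj _ z).symm
          rw [(hzW : G.neighborSet z = {v})] at this
          exact hxv this
        · exfalso
          have hzv : z ≠ v := spc_ne_v hS hzS
          have : (x : V) ∈ cls G v z := rel_of_adj hzv hxv (hz : G.Adj _ z).symm
          rw [cls_of_mem_spc hS hzS] at this
          exact x.2 (Or.inr ⟨S, hS, this⟩)
      · exact absurd (h ⟨z, hzD⟩ (hz : G.Adj _ z)) not_false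
    obtain ⟨w, hw⟩ := hnoiso (x : V)
    have hwv : w = v := hN hw
    have hNx : G.neighborSet (x : V) = {v} :=
      Set.eq_of_subset_of_subset hN (by rintro z rfl; exact hwv ▸ hw)
    exact x.2 (Or.inl (Or.inr hNx))
  -- fewer vertices
  have hcards : Fintype.card ↥(Dᶜ) + D.ncard = Fintype.card V := by
    rw [← Nat.card_eq_fintype_card, ← Nat.card_eq_fintype_card, Nat.card_coe_set_eq]
    rw [Nat.add_comm]
    exact Set.ncard_add_ncard_compl D
  have hDpos : 0 < D.ncard := (Set.ncard_pos (Set.toFinite _)).mpr ⟨v, hvD⟩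
  have hcardlt : Fintype.card ↥(Dᶜ) < Fintype.card V := by omega
  -- G' is not a counterexample
  have hbound' : acmBound G' ≤ (acyclicMatchingNumber G' : ℚ) := by
    by_contra h
    push_neg at h
    exact absurd (hminimal ↥(Dᶜ) G' hsub' hnoiso' h) (by omega)
  have hbval : acmBound G' = (Fintype.card ↥(Dᶜ) : ℚ) / 4 := by
    rw [acmBound]
    rw [show kappa G' K23 = 0 from kappa_G'_K23, show kappa G' K4plus = 0 from kappa_G'_K4plus,
      show kappa G' K33 = 0 from kappa_G'_K33]
    push_cast
    ring
  -- max acyclic matching of G'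
  obtain ⟨M', hM'am, hM'card⟩ := exists_max_acyclic_matching (G := G')
  set ι : G' ↪g G := Embedding.induce Dᶜ with hι
  have hιval : ⇑ι.toHom = (Subtype.val : ↥Dᶜ → V) := rfl
  set M₁ : G.Subgraph := M'.map ι.toHom with hM₁
  have hM₁match : M₁.IsMatching := hM'am.1.map ι.toHom ι.injective
  have hM₁supp : M₁.support = Subtype.val '' M'.support := by
    rw [hM₁match.support_eq_verts, hM₁, Subgraph.map_verts, hιval,
      hM'am.1.support_eq_verts]
  have hM₁sub : M₁.support ⊆ Dᶜ := by
    rw [hM₁supp]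
    rintro _ ⟨y, hy, rfl⟩
    exact y.2
  set M₂ : G.Subgraph := G.subgraphOfAdj huv with hM₂
  have hM₂supp : M₂.support = {u, v} := support_subgraphOfAdj huv
  obtain ⟨M₃, hM₃match, hM₃supp, hM₃card, hM₃pairs⟩ :=
    edge_pack (G := G) (v := v) (SpcSet G v) (Set.toFinite _) subset_rfl
  have huSpc : u ∉ ⋃₀ SpcSet G v := by
    rintro ⟨S, hS, hu'⟩
    exact wset_not_mem_spc huW hS hu'
  have hvSpc : v ∉ ⋃₀ SpcSet G v := by
    rintro ⟨S, hS, hv'⟩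
    exact v_not_mem_spc hS hv'
  have hDSpc : ⋃₀ SpcSet G v ⊆ D := fun z hz => Or.inr hz
  -- assemble matching
  have hdisj12 : Disjoint M₁.support M₂.support := by
    rw [hM₂supp, Set.disjoint_right]
    rintro z (rfl | rfl) hz
    · exact (hM₁sub hz) huD
    · exact (hM₁sub hz) hvD
  have hdisj123 : Disjoint (M₁ ⊔ M₂).support M₃.support := by
    rw [support_sup, Set.disjoint_left]
    rintro z (hz | hz) hz3
    · exact (hM₁sub hz) (hDSpc (hM₃supp hz3))
    · rw [hM₂supp] at hz
      rcases hz with rfl | rfl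
      · exact huSpc (hM₃supp hz3)
      · exact hvSpc (hM₃supp hz3)
  set M : G.Subgraph := (M₁ ⊔ M₂) ⊔ M₃ with hM
  have hmatch : M.IsMatching :=
    (hM₁match.sup (Subgraph.IsMatching.subgraphOfAdj huv) hdisj12).sup hM₃match hdisj123
  have hMsupp : M.support = (M₁.support ∪ M₂.support) ∪ M₃.support := by
    rw [hM, support_sup, support_sup]
  -- edge count
  have hcount : M.edgeSet.ncard = M'.edgeSet.ncard + 1 + (SpcSet G v).ncard := by
    have he2 : M₂.edgeSet = {s(u, v)} := G.edgeSet_subgraphOfAdj huv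
    have hd12 : Disjoint M₁.edgeSet M₂.edgeSet := by
      rw [he2, Set.disjoint_right]
      rintro e rfl he1
      exact (hM₁sub (endpoints_mem_support_of_mem_edgeSet he1).1) huD
    have hd123 : Disjoint (M₁ ⊔ M₂).edgeSet M₃.edgeSet := by
      rw [Subgraph.edgeSet_sup, Set.disjoint_left]
      rintro e (he | he) he3
      · induction e with
        | _ a b =>
          exact (hM₁sub (endpoints_mem_support_of_mem_edgeSet he).1)
            (hDSpc (hM₃supp (endpoints_mem_support_of_mem_edgeSet he3).1))
      · rw [he2] at he
        subst he
        exact huSpc (hM₃supp (endpoints_mem_support_of_mem_edgeSet he3).1)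
    rw [hM, Subgraph.edgeSet_sup,
      Set.ncard_union_eq hd123 (Set.toFinite _) (Set.toFinite _),
      Subgraph.edgeSet_sup, Set.ncard_union_eq hd12 (Set.toFinite _) (Set.toFinite _),
      he2, Set.ncard_singleton, hM₃card]
    have : M₁.edgeSet.ncard = M'.edgeSet.ncard := edgeSet_map_ncard ι.toHom ι.injective M'
    omega
  -- acyclicity
  have hacyc : (G.induce M.support).IsAcyclic := by
    intro z c hc
    set cw : G.Walk (z : V) (z : V) := c.map (Embedding.induce M.support).toHom with hcwdef
    have hcw : cw.IsCycle := (Walk.map_isCycle_iff_of_injective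
      (fun a b h => Subtype.val_injective h : Function.Injective
        ⇑(Embedding.induce M.support).toHom)).mpr hc
    have hsupsub : ∀ w ∈ cw.support, w ∈ M.support := by
      intro w hw
      replace hw : w ∈ (c.map (Embedding.induce M.support).toHom).support := hw
      rw [Walk.support_map] at hw
      obtain ⟨w', _, rfl⟩ := List.mem_map.mp hw
      exact w'.2
    have hvnot : v ∉ cw.support := hnc _ cw hcw
    have hzv : (z : V) ≠ v := fun h => hvnot (h ▸ cw.start_mem_support)
    have hall : ∀ w ∈ cw.support, w ∈ cls G v (z : V) :=
      walk_support_subset_cls cw hvnot hzv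
    by_cases hM₃hit : ∃ w ∈ cw.support, w ∈ M₃.support
    · obtain ⟨w, hwsup, hwM₃⟩ := hM₃hit
      obtain ⟨S, hSspc, hwS⟩ := hM₃supp hwM₃
      have hSz : cls G v (z : V) = S := by
        rw [← cls_eq_of_mem (hall w hwsup)]
        exact cls_of_mem_spc hSspc hwS
      obtain ⟨a, b, hab⟩ := hM₃pairs S hSspc
      refine three_distinct_support (a := a) (b := b) cw hcw ?_
      intro w' hw'
      have hw'S : w' ∈ S := hSz ▸ hall w' hw'
      have hw'M := hsupsub w' hw'
      rw [hMsupp] at hw'M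
      rcases hw'M with (hw'M | hw'M) | hw'M
      · exact absurd (hDSpc ⟨S, hSspc, hw'S⟩) (hM₁sub hw'M)
      · rw [hM₂supp] at hw'M
        rcases hw'M with rfl | rfl
        · exact absurd hw'S (wset_not_mem_spc huW hSspc)
        · exact absurd hw' hvnot
      · exact hab w' ⟨hw'M, hw'S⟩
    · by_cases huhit : u ∈ cw.support
      · have hclsu : cls G v u = {u} := by
          refine cls_eq_singleton ?_ (G.ne_of_adj huv)
          intro z' hz'
          have : z' ∈ G.neighborSet u := hz'
          rw [hNu] at this
          exact this
        have hcz : cls G v (z : V) = {u} := by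
          rw [← cls_eq_of_mem (hall u huhit), hclsu]
        refine three_distinct_support (a := u) (b := u) cw hcw ?_
        intro w' hw'
        have := hall w' hw'
        rw [hcz] at this
        exact Or.inl this
      · -- all support in M₁
        have hsubM₁ : ∀ w ∈ cw.support, w ∈ Subtype.val '' M'.support := by
          intro w hw
          have hwM := hsupsub w hw
          rw [hMsupp] at hwM
          rcases hwM with (hwM | hwM) | hwM
          · exact hM₁supp ▸ hwM
          · rw [hM₂supp] at hwM
            rcases hwM with rfl | rfl
            · exact absurd hw huhit
            · exact absurd hw hvnot
          · exact absurd ⟨w, hw, hwM⟩ hM₃hit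
        obtain ⟨q, hq⟩ := exists_induce_walk cw hsubM₁
        have hqcyc : q.IsCycle := by
          refine (Walk.map_isCycle_iff_of_injective (fun a b h => Subtype.val_injective h :
            Function.Injective ⇑(Embedding.induce (Subtype.val '' M'.support)).toHom)).mp ?_
          rw [hq]
          exact hcw
        have hacyc' : (G.induce (Subtype.val '' M'.support)).IsAcyclic :=
          isAcyclic_of_iso (doubleInduceIso (G := G) (Dᶜ) M'.support) hM'am.2
        exact hacyc' q hqcyc
  -- conclude
  have hnuG : M'.edgeSet.ncard + 1 + (SpcSet G v).ncard ≤ acyclicMatchingNumber G := by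
    rw [← hcount]
    exact nu_ge M ⟨hmatch, hacyc⟩
  have hDle := Dset_ncard_le (v := v) hsub
  -- rational arithmetic
  rw [acmBound] at hce
  rw [hbval] at hbound'
  have c2 : ((Fintype.card ↥(Dᶜ) : ℚ)) / 4 ≤ (acyclicMatchingNumber G' : ℚ) := hbound'
  have c3 : (Fintype.card ↥(Dᶜ) : ℚ) + (D.ncard : ℚ) = (Fintype.card V : ℚ) := by
    exact_mod_cast hcards
  have c4 : (D.ncard : ℚ) ≤ 4 + 4 * ((SpcSet G v).ncard : ℚ)
      + ((kappa G K23 : ℚ) + (kappa G K4plus : ℚ) + 2 * (kappa G K33 : ℚ)) := by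
    exact_mod_cast hDle
  have c5 : (acyclicMatchingNumber G' : ℚ) + 1 + ((SpcSet G v).ncard : ℚ)
      ≤ (acyclicMatchingNumber G : ℚ) := by
    rw [← hM'card]
    exact_mod_cast hnuG
  linarith

end Final

end AMaux

/-- In a minimum-order counterexample, no vertex of degree 1 is adjacent to a
vertex that does not lie on a cycle: every neighbor of a degree-1 vertex lies on
a cycle. -/
theorem stmt_5 {V : Type} [Fintype V] (G : SimpleGraph V)
    (hmin : IsMinCounterexample G) :
    ∀ u v : V, (G.neighborSet u).ncard = 1 → G.Adj u v →
      ∃ (w : V) (c : G.Walk w w), c.IsCycle ∧ v ∈ c.support := by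
  intro u v hdeg huv
  by_contra h
  push_neg at h
  exact AMaux.main_contra G hmin u v hdeg huv h
end
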